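/- arXiv:1807.10907 — 8 statements merged into one kernel-verified Lean document; each statement's English description precedes it below -/
import Mathlib

section
/- Let n ≥ 3, k ≥ 7 with gcd(n,k) = 1. Then in the submonoid T = ⟨k, k+n, kn−(k+n)⟩ of ℕ, the element k+n is an atom, i.e., k+n cannot be written as a sum of two nonzero elements of T. -/
/-- `a` is an atom of the additive submonoid `T` of `ℕ`: a nonzero element of `T`
that is not a sum of two nonzero elements of `T`. -/
def NumAtom (T : AddSubmonoid ℕ) (a : ℕ) : Prop :=
  a ∈ T ∧ a ≠ 0 ∧ ¬ ∃ b c : ℕ, b ∈ T ∧ c ∈ T ∧ b ≠ 0 ∧ c ≠ 0 ∧ a = b + c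

/-- `AS T x` is the set of lengths of factorizations of `x` into atoms of `T`:
the set of `m : ℕ` such that `x` is a sum of `m` atoms of `T`. -/
def AS (T : AddSubmonoid ℕ) (x : ℕ) : Set ℕ :=
  { m | ∃ s : Multiset ℕ, (∀ a ∈ s, NumAtom T a) ∧ Multiset.card s = m ∧ s.sum = x }

lemma rep_aux (k n M x : ℕ) (hx : x ∈ AddSubmonoid.closure ({k, k + n, M} : Set ℕ)) :
    ∃ a b c : ℕ, x = a * k + b * (k + n) + c * M := by
  induction hx using AddSubmonoid.closure_induction with
  | mem y hy =>
    rcases hy with h | h | h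
    · exact ⟨1, 0, 0, by simp [h]⟩
    · exact ⟨0, 1, 0, by simp [h]⟩
    · simp only [Set.mem_singleton_iff] at h
      exact ⟨0, 0, 1, by simp [h]⟩
  | zero => exact ⟨0, 0, 0, by simp⟩
  | add x y _ _ ihx ihy =>
    obtain ⟨a1, b1, c1, h1⟩ := ihx
    obtain ⟨a2, b2, c2, h2⟩ := ihy
    exact ⟨a1 + a2, b1 + b2, c1 + c2, by subst h1 h2; ring⟩

theorem stmt_4 (n k : ℕ) (hn : 3 ≤ n) (hk : 7 ≤ k) (hgcd : Nat.gcd n k = 1) :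
    NumAtom (AddSubmonoid.closure {k, k + n, k * n - (k + n)}) (k + n) := by
  have hkn : 2 * (k + n) + 1 ≤ k * n := by nlinarith
  set M := k * n - (k + n) with hMdef
  have hM : k + n < M := by omega
  refine ⟨AddSubmonoid.subset_closure (by simp), by omega, ?_⟩
  rintro ⟨b, c, hb, hc, hb0, hc0, heq⟩
  obtain ⟨a1, b1, c1, hbrep⟩ := rep_aux k n M b hb
  obtain ⟨a2, b2, c2, hcrep⟩ := rep_aux k n M c hc
  have hblt : b < k + n := by omega
  have hclt : c < k + n := by omega
  have hb1 : b1 = 0 := by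
    by_contra h
    have : k + n ≤ b1 * (k + n) := Nat.le_mul_of_pos_left _ (Nat.pos_of_ne_zero h)
    omega
  have hc1 : c1 = 0 := by
    by_contra h
    have : M ≤ c1 * M := Nat.le_mul_of_pos_left _ (Nat.pos_of_ne_zero h)
    omega
  have hb2 : b2 = 0 := by
    by_contra h
    have : k + n ≤ b2 * (k + n) := Nat.le_mul_of_pos_left _ (Nat.pos_of_ne_zero h)
    omega
  have hc2 : c2 = 0 := by
    by_contra h
    have : M ≤ c2 * M := Nat.le_mul_of_pos_left _ (Nat.pos_of_ne_zero h)
    omega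
  have hdvd : k ∣ k + n := ⟨a1 + a2, by rw [heq, hbrep, hcrep, hb1, hc1, hb2, hc2]; ring⟩
  have hdn : k ∣ n := (Nat.dvd_add_right (dvd_refl k)).mp hdvd
  have h1 : k ∣ 1 := hgcd ▸ Nat.dvd_gcd hdn dvd_rfl
  have := Nat.le_of_dvd one_pos h1
  omega
end

section
/- Let n ≥ 3, k ≥ 7 with gcd(n,k) = 1. Then in the submonoid T = ⟨k, k+n, kn−(k+n)⟩ of ℕ, the element kn−(k+n) is an atom; in particular there are no λ, μ ∈ ℕ with kn−(k+n) = λk + μ(k+n). -/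
lemma mem_rep (k n c x : ℕ) (hx : x ∈ AddSubmonoid.closure {k, k + n, c}) :
    ∃ a b d : ℕ, x = a * k + b * (k + n) + d * c := by
  induction hx using AddSubmonoid.closure_induction with
  | mem y hy =>
    rcases hy with h | h | h
    · exact ⟨1, 0, 0, by simp [h]⟩
    · exact ⟨0, 1, 0, by simp [h]⟩
    · exact ⟨0, 0, 1, by simp at h; simp [h]⟩
  | zero => exact ⟨0, 0, 0, by simp⟩
  | add x y _ _ ihx ihy =>
    obtain ⟨a1, b1, d1, h1⟩ := ihx
    obtain ⟨a2, b2, d2, h2⟩ := ihy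
    exact ⟨a1 + a2, b1 + b2, d1 + d2, by subst h1 h2; ring⟩

theorem stmt_5 (n k : ℕ) (hn : 3 ≤ n) (hk : 7 ≤ k) (hgcd : Nat.gcd n k = 1) :
    NumAtom (AddSubmonoid.closure {k, k + n, k * n - (k + n)}) (k * n - (k + n)) ∧
      ¬ ∃ l m : ℕ, k * n - (k + n) = l * k + m * (k + n) := by
  set c := k * n - (k + n) with hc
  have hkn : k + n + 1 ≤ k * n := by nlinarith
  have hcpos : 0 < c := by omega
  have nosum : ¬ ∃ l m : ℕ, c = l * k + m * (k + n) := by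
    rintro ⟨l, m, h⟩
    have key : (l + m + 1) * k + (m + 1) * n = n * k := by
      have h2 : k * n = l * k + m * (k + n) + (k + n) := by omega
      calc (l + m + 1) * k + (m + 1) * n = l * k + m * (k + n) + (k + n) := by ring
        _ = k * n := h2.symm
        _ = n * k := by ring
    have hdvd : n ∣ (l + m + 1) * k := by
      have h1 : n ∣ n * (m + 1) + (l + m + 1) * k := by
        have : n * (m + 1) + (l + m + 1) * k = n * k := by rw [← key]; ring
        rw [this]; exact Dvd.intro k rfl
      exact (Nat.dvd_add_right (Dvd.intro (m + 1) rfl)).mp h1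
    have hdvd2 : n ∣ l + m + 1 := (Nat.Coprime.dvd_of_dvd_mul_right hgcd) hdvd
    have hle : n ≤ l + m + 1 := Nat.le_of_dvd (by omega) hdvd2
    have : n * k ≤ (l + m + 1) * k := Nat.mul_le_mul_right k hle
    have : 0 < (m + 1) * n := by positivity
    omega
  refine ⟨⟨AddSubmonoid.subset_closure (by simp), by omega, ?_⟩, nosum⟩
  rintro ⟨b, d, hb, hd, hb0, hd0, hsum⟩
  obtain ⟨a1, b1, d1, h1⟩ := mem_rep k n c b hb
  obtain ⟨a2, b2, d2, h2⟩ := mem_rep k n c d hd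
  have heq : c = (a1 + a2) * k + (b1 + b2) * (k + n) + (d1 + d2) * c := by
    have : b + d = (a1 + a2) * k + (b1 + b2) * (k + n) + (d1 + d2) * c := by
      rw [h1, h2]; ring
    rw [← hsum] at this; exact this
  rcases Nat.lt_or_ge (d1 + d2) 1 with hcase | hcase
  · have hd12 : d1 + d2 = 0 := by omega
    rw [hd12, zero_mul, add_zero] at heq
    exact nosum ⟨a1 + a2, b1 + b2, heq⟩
  rcases Nat.lt_or_ge (d1 + d2) 2 with hcase2 | hcase2
  · have hd1 : d1 + d2 = 1 := by omega
    rw [hd1, one_mul] at heq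
    have hz : (a1 + a2) * k + (b1 + b2) * (k + n) = 0 := by omega
    have ha : a1 + a2 = 0 := by
      rcases Nat.mul_eq_zero.mp (by omega : (a1 + a2) * k = 0) with h | h
      · exact h
      · omega
    have hbz : b1 + b2 = 0 := by
      rcases Nat.mul_eq_zero.mp (by omega : (b1 + b2) * (k + n) = 0) with h | h
      · exact h
      · omega
    rcases (by omega : d1 = 0 ∨ d2 = 0) with h | h
    · apply hb0; rw [h1]; simp [h]; omega
    · apply hd0; rw [h2]; simp [h]; omega
  · have : 2 * c ≤ (d1 + d2) * c := Nat.mul_le_mul_right c hcase2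
    omega
end

section
/- Let n ≥ 3, k ≥ 7 with gcd(n,k) = 1, and let T = ⟨k, k+n, kn−(k+n)⟩. If α, β, γ ∈ ℕ satisfy αk + β(k+n) + γ(kn−(k+n)) = kn, then (α,β,γ) = (0,1,1) or (α,β,γ) = (n,0,0). Consequently the set of lengths of factorizations of kn into atoms of T equals {2, n}. -/
private lemma tri_count (k1 k2 k3 : ℕ) (h12 : k1 ≠ k2) (h13 : k1 ≠ k3) (h23 : k2 ≠ k3) :
    ∀ s : Multiset ℕ, (∀ a ∈ s, a = k1 ∨ a = k2 ∨ a = k3) →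
    s.sum = s.count k1 * k1 + s.count k2 * k2 + s.count k3 * k3 ∧
      Multiset.card s = s.count k1 + s.count k2 + s.count k3 := by
  intro s
  induction s using Multiset.induction_on with
  | empty => simp
  | cons a t ih =>
    intro hs
    obtain ⟨h1, h2⟩ := ih (fun b hb => hs b (Multiset.mem_cons_of_mem hb))
    rcases hs a (Multiset.mem_cons_self a t) with rfl | rfl | rfl
    · rw [Multiset.sum_cons, Multiset.card_cons, h1, h2, Multiset.count_cons_self,
        Multiset.count_cons_of_ne h12.symm, Multiset.count_cons_of_ne h13.symm]
      exact ⟨by ring, by ring⟩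
    · rw [Multiset.sum_cons, Multiset.card_cons, h1, h2, Multiset.count_cons_self,
        Multiset.count_cons_of_ne h12, Multiset.count_cons_of_ne h23.symm]
      exact ⟨by ring, by ring⟩
    · rw [Multiset.sum_cons, Multiset.card_cons, h1, h2, Multiset.count_cons_self,
        Multiset.count_cons_of_ne h13, Multiset.count_cons_of_ne h23]
      exact ⟨by ring, by ring⟩

set_option maxHeartbeats 1000000 in
theorem stmt_7 (n k : ℕ) (hn : 3 ≤ n) (hk : 7 ≤ k) (hgcd : Nat.gcd n k = 1) :
    (∀ α β γ : ℕ, α * k + β * (k + n) + γ * (k * n - (k + n)) = k * n →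
      (α, β, γ) = (0, 1, 1) ∨ (α, β, γ) = (n, 0, 0)) ∧
    AS (AddSubmonoid.closure {k, k + n, k * n - (k + n)}) (k * n) = {2, n} := by
  have h2kn : 2 * k + 2 * n + 1 ≤ k * n := by nlinarith
  set c := k * n - (k + n) with hcdef
  have hcsum : c + (k + n) = k * n := Nat.sub_add_cancel (by nlinarith)
  clear_value c
  clear hcdef
  have hkc : k + n + 1 ≤ c := by omega
  have hcop : Nat.Coprime k n := Nat.coprime_comm.mp hgcd
  have hndvd : ¬ (k ∣ n) := by
    intro hdvd
    have : Nat.gcd n k = k := Nat.gcd_eq_right hdvd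
    omega
  -- the key counting / uniqueness lemma
  have hrep : ∀ α β γ : ℕ, α * k + β * (k + n) + γ * c = k * n →
      (α, β, γ) = (0, 1, 1) ∨ (α, β, γ) = (n, 0, 0) := by
    intro α β γ h
    have hγ : γ ≤ 1 := by
      by_contra hγ
      push_neg at hγ
      have h2c : 2 * c ≤ γ * c := Nat.mul_le_mul (show 2 ≤ γ by omega) le_rfl
      linarith [Nat.zero_le (α * k), Nat.zero_le (β * (k + n))]
    interval_cases γ
    · -- γ = 0
      right
      have e : k * (α + β) + β * n = k * n := by
        rw [show k * (α + β) + β * n = α * k + β * (k + n) + 0 * c by ring]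
        exact h
      have h1 : k ∣ β * n := by
        have hβn : β * n = k * n - k * (α + β) :=
          (Nat.sub_eq_of_eq_add (by linarith [e])).symm
        rw [hβn]
        exact Nat.dvd_sub (dvd_mul_right k n) (dvd_mul_right k (α + β))
      have hβk : k ∣ β := hcop.dvd_of_dvd_mul_right h1
      obtain ⟨t, rfl⟩ := hβk
      rcases Nat.eq_zero_or_pos t with rfl | ht
      · simp only [Nat.mul_zero, Nat.zero_mul, Nat.add_zero] at e ⊢
        have hα : α = n := Nat.eq_of_mul_eq_mul_left (by omega) e
        simp [hα]
      · exfalso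
        have h3 : k * n ≤ t * (k * n) := Nat.le_mul_of_pos_left _ ht
        nlinarith [e, h3]
    · -- γ = 1
      left
      have e : α * k + β * (k + n) = k + n := by
        have h' : α * k + β * (k + n) + c = (k + n) + c := by
          rw [show (k + n) + c = c + (k + n) by ring, hcsum]
          linarith [h]
        exact Nat.add_right_cancel h'
      have hβ : β ≤ 1 := by
        by_contra hβ
        push_neg at hβ
        have := Nat.mul_le_mul (show 2 ≤ β by omega) (le_refl (k + n))
        linarith [Nat.zero_le (α * k)]
      interval_cases β
      · -- β = 0 : α * k = k + n, impossible
        exfalso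
        have e' : α * k = k + n := by linarith [e]
        have hα : 1 ≤ α := by
          rcases Nat.eq_zero_or_pos α with rfl | h'
          · simp at e'; omega
          · exact h'
        obtain ⟨α', rfl⟩ := Nat.exists_eq_add_of_le hα
        apply hndvd
        exact ⟨α', by linarith [e']⟩
      · -- β = 1 : α = 0
        have hα : α * k = 0 := by linarith [e]
        have : α = 0 := by
          rcases Nat.mul_eq_zero.mp hα with h' | h' <;> omega
        simp [this]
  -- elements of T are the nonnegative combinations
  let S : AddSubmonoid ℕ :=
    { carrier := { x | ∃ α β γ : ℕ, x = α * k + β * (k + n) + γ * c }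
      zero_mem' := ⟨0, 0, 0, by simp⟩
      add_mem' := by
        rintro a b ⟨a1, a2, a3, rfl⟩ ⟨b1, b2, b3, rfl⟩
        exact ⟨a1 + b1, a2 + b2, a3 + b3, by ring⟩ }
  set T := AddSubmonoid.closure ({k, k + n, c} : Set ℕ) with hT
  have hgen : ∀ α β γ : ℕ, α * k + β * (k + n) + γ * c ∈ T := by
    intro α β γ
    have hk' : k ∈ T := AddSubmonoid.subset_closure (by simp)
    have hkn' : (k + n) ∈ T := AddSubmonoid.subset_closure (by simp)
    have hc' : c ∈ T := AddSubmonoid.subset_closure (by simp)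
    apply add_mem (add_mem ?_ ?_) ?_
    · simpa [smul_eq_mul] using AddSubmonoid.nsmul_mem _ hk' α
    · simpa [smul_eq_mul] using AddSubmonoid.nsmul_mem _ hkn' β
    · simpa [smul_eq_mul] using AddSubmonoid.nsmul_mem _ hc' γ
  have hmemT : ∀ x, x ∈ T → ∃ α β γ : ℕ, x = α * k + β * (k + n) + γ * c := by
    intro x hx
    have hle : T ≤ S := by
      rw [hT]
      apply AddSubmonoid.closure_le.mpr
      intro y hy
      simp only [Set.mem_insert_iff, Set.mem_singleton_iff] at hy
      rcases hy with rfl | rfl | rfl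
      · exact ⟨1, 0, 0, by ring⟩
      · exact ⟨0, 1, 0, by ring⟩
      · exact ⟨0, 0, 1, by ring⟩
    exact hle hx
  -- lower bound for nonzero combinations
  have hlow : ∀ α β γ : ℕ, 1 ≤ α + β + γ → k ≤ α * k + β * (k + n) + γ * c := by
    intro α β γ hsum
    calc k = 1 * k := (one_mul k).symm
      _ ≤ (α + β + γ) * k := Nat.mul_le_mul hsum le_rfl
      _ = α * k + β * k + γ * k := by ring
      _ ≤ α * k + β * (k + n) + γ * c := by
          have i1 : β * k ≤ β * (k + n) := Nat.mul_le_mul le_rfl (by omega)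
          have i2 : γ * k ≤ γ * c := Nat.mul_le_mul le_rfl (by omega)
          linarith
  -- unique representation (count) lemmas for the three generators
  have count_k : ∀ A B Γ : ℕ, A * k + B * (k + n) + Γ * c = k → A + B + Γ = 1 := by
    intro A B Γ h
    have hB : B = 0 := by
      by_contra hB
      have := Nat.mul_le_mul (Nat.one_le_iff_ne_zero.mpr hB) (le_refl (k + n))
      linarith [Nat.zero_le (A * k), Nat.zero_le (Γ * c)]
    have hΓ : Γ = 0 := by
      by_contra hΓ
      have := Nat.mul_le_mul (Nat.one_le_iff_ne_zero.mpr hΓ) (le_refl c)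
      linarith [Nat.zero_le (A * k), Nat.zero_le (B * (k + n))]
    subst hB; subst hΓ
    have hA : A * k = 1 * k := by linarith [h]
    have : A = 1 := Nat.eq_of_mul_eq_mul_right (by omega) hA
    omega
  have count_kn : ∀ A B Γ : ℕ, A * k + B * (k + n) + Γ * c = k + n → A + B + Γ = 1 := by
    intro A B Γ h
    have hΓ : Γ = 0 := by
      by_contra hΓ
      have := Nat.mul_le_mul (Nat.one_le_iff_ne_zero.mpr hΓ) (le_refl c)
      linarith [Nat.zero_le (A * k), Nat.zero_le (B * (k + n))]
    subst hΓ
    have hB : B ≤ 1 := by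
      by_contra hB
      push_neg at hB
      have := Nat.mul_le_mul (show 2 ≤ B by omega) (le_refl (k + n))
      linarith [Nat.zero_le (A * k)]
    interval_cases B
    · exfalso
      have e' : A * k = k + n := by linarith [h]
      have hA : 1 ≤ A := by
        rcases Nat.eq_zero_or_pos A with rfl | h'
        · simp at e'; omega
        · exact h'
      obtain ⟨A', rfl⟩ := Nat.exists_eq_add_of_le hA
      exact hndvd ⟨A', by linarith [e']⟩
    · have hA : A * k = 0 := by linarith [h]
      rcases Nat.mul_eq_zero.mp hA with h' | h' <;> omega
  have count_c : ∀ A B Γ : ℕ, A * k + B * (k + n) + Γ * c = c → A + B + Γ = 1 := by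
    intro A B Γ h
    have hΓ : Γ ≤ 1 := by
      by_contra hΓ
      push_neg at hΓ
      have := Nat.mul_le_mul (show 2 ≤ Γ by omega) (le_refl c)
      linarith [Nat.zero_le (A * k), Nat.zero_le (B * (k + n))]
    interval_cases Γ
    · -- Γ = 0 : A*k + B*(k+n) = c, impossible
      exfalso
      have e0 : A * k + B * (k + n) + (k + n) = k * n := by
        have : A * k + B * (k + n) = c := by linarith [h]
        rw [this]; exact hcsum
      have e : k * (A + B + 1) + (B + 1) * n = k * n := by
        rw [show k * (A + B + 1) + (B + 1) * n = A * k + B * (k + n) + (k + n) by ring]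
        exact e0
      have h1 : k ∣ (B + 1) * n := by
        have hb : (B + 1) * n = k * n - k * (A + B + 1) :=
          (Nat.sub_eq_of_eq_add (by linarith [e])).symm
        rw [hb]
        exact Nat.dvd_sub (dvd_mul_right k n) (dvd_mul_right k (A + B + 1))
      have hBk : k ∣ (B + 1) := hcop.dvd_of_dvd_mul_right h1
      have hBk' : k ≤ B + 1 := Nat.le_of_dvd (by omega) hBk
      have h3 : k * n ≤ (B + 1) * n := Nat.mul_le_mul hBk' le_rfl
      have h4 : k * 1 ≤ k * (A + B + 1) := Nat.mul_le_mul le_rfl (by omega)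
      linarith
    · -- Γ = 1 : A = B = 0
      have hAB : A * k + B * (k + n) = 0 := by linarith [h]
      have hA : A * k = 0 := Nat.eq_zero_of_add_eq_zero_right hAB
      have hB : B * (k + n) = 0 := Nat.eq_zero_of_add_eq_zero_left hAB
      rcases Nat.mul_eq_zero.mp hA with h' | h' <;>
        rcases Nat.mul_eq_zero.mp hB with h'' | h'' <;> omega
  have hkT : k ∈ T := AddSubmonoid.subset_closure (by simp)
  have hknT : k + n ∈ T := AddSubmonoid.subset_closure (by simp)
  have hcT : c ∈ T := AddSubmonoid.subset_closure (by simp)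
  have hcount1 : ∀ x ∈ T, x ≠ 0 → ∃ α β γ : ℕ,
      x = α * k + β * (k + n) + γ * c ∧ 1 ≤ α + β + γ := by
    intro x hx hx0
    obtain ⟨α, β, γ, rfl⟩ := hmemT x hx
    refine ⟨α, β, γ, rfl, ?_⟩
    by_contra h'
    push_neg at h'
    have : α = 0 ∧ β = 0 ∧ γ = 0 := by omega
    obtain ⟨rfl, rfl, rfl⟩ := this
    simp at hx0
  have hsplit : ∀ g : ℕ, (∀ A B Γ : ℕ, A * k + B * (k + n) + Γ * c = g → A + B + Γ = 1) →
      ¬ ∃ b d : ℕ, b ∈ T ∧ d ∈ T ∧ b ≠ 0 ∧ d ≠ 0 ∧ g = b + d := by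
    intro g hcount
    rintro ⟨b, d, hb, hd, hb0, hd0, hbd⟩
    obtain ⟨a1, a2, a3, rfl, h1⟩ := hcount1 b hb hb0
    obtain ⟨b1, b2, b3, rfl, h2⟩ := hcount1 d hd hd0
    have := hcount (a1 + b1) (a2 + b2) (a3 + b3) (by rw [hbd]; ring)
    omega
  -- atoms of T are exactly k, k+n, c
  have hatom : ∀ a, NumAtom T a ↔ (a = k ∨ a = k + n ∨ a = c) := by
    intro a
    constructor
    · rintro ⟨haT, ha0, hnot⟩
      obtain ⟨α, β, γ, rfl, hcnt⟩ := hcount1 _ haT ha0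
      rcases Nat.lt_or_ge (α + β + γ) 2 with h1 | h1
      · have : (α = 1 ∧ β = 0 ∧ γ = 0) ∨ (α = 0 ∧ β = 1 ∧ γ = 0) ∨
            (α = 0 ∧ β = 0 ∧ γ = 1) := by omega
        rcases this with ⟨rfl, rfl, rfl⟩ | ⟨rfl, rfl, rfl⟩ | ⟨rfl, rfl, rfl⟩
        · left; ring
        · right; left; ring
        · right; right; ring
      · exfalso
        apply hnot
        rcases (show 1 ≤ α ∨ 1 ≤ β ∨ 1 ≤ γ by omega) with hp | hp | hp
        · obtain ⟨α', rfl⟩ := Nat.exists_eq_add_of_le hp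
          refine ⟨k, α' * k + β * (k + n) + γ * c, hkT, hgen α' β γ, by omega, ?_, by ring⟩
          have hl := hlow α' β γ (by omega)
          exact (Nat.lt_of_lt_of_le (show (0:ℕ) < k by omega) hl).ne'
        · obtain ⟨β', rfl⟩ := Nat.exists_eq_add_of_le hp
          refine ⟨k + n, α * k + β' * (k + n) + γ * c, hknT, hgen α β' γ, by omega, ?_, by ring⟩
          have hl := hlow α β' γ (by omega)
          exact (Nat.lt_of_lt_of_le (show (0:ℕ) < k by omega) hl).ne'
        · obtain ⟨γ', rfl⟩ := Nat.exists_eq_add_of_le hp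
          refine ⟨c, α * k + β * (k + n) + γ' * c, hcT, hgen α β γ', by omega, ?_, by ring⟩
          have hl := hlow α β γ' (by omega)
          exact (Nat.lt_of_lt_of_le (show (0:ℕ) < k by omega) hl).ne'
    · rintro (rfl | rfl | rfl)
      · exact ⟨hkT, by omega, hsplit _ count_k⟩
      · exact ⟨hknT, by omega, hsplit _ count_kn⟩
      · exact ⟨hcT, by omega, hsplit _ count_c⟩
  refine ⟨hrep, ?_⟩
  have hne12 : k ≠ k + n := by omega
  have hne13 : k ≠ c := by omega
  have hne23 : k + n ≠ c := by omega
  ext m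
  simp only [AS, Set.mem_setOf_eq, Set.mem_insert_iff, Set.mem_singleton_iff]
  constructor
  · rintro ⟨s, hs, hcard, hsum⟩
    have hvals : ∀ a ∈ s, a = k ∨ a = k + n ∨ a = c := fun a ha => (hatom a).mp (hs a ha)
    obtain ⟨h1, h2⟩ := tri_count k (k + n) c hne12 hne13 hne23 s hvals
    have heq : s.count k * k + s.count (k + n) * (k + n) + s.count c * c = k * n := by
      rw [← h1]; exact hsum
    rcases hrep _ _ _ heq with h | h <;>
      simp only [Prod.mk.injEq] at h <;> omega
  · rintro (rfl | rfl)
    · refine ⟨{k + n, c}, ?_, by simp, ?_⟩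
      · intro a ha
        simp only [Multiset.insert_eq_cons, Multiset.mem_cons, Multiset.mem_singleton] at ha
        rcases ha with rfl | rfl
        · exact (hatom _).mpr (Or.inr (Or.inl rfl))
        · exact (hatom _).mpr (Or.inr (Or.inr rfl))
      · simp only [Multiset.insert_eq_cons, Multiset.sum_cons, Multiset.sum_singleton]
        linarith
    · refine ⟨Multiset.replicate m k, ?_, by simp, ?_⟩
      · intro a ha
        rw [Multiset.eq_of_mem_replicate ha]
        exact (hatom _).mpr (Or.inl rfl)
      · rw [Multiset.sum_replicate, smul_eq_mul, Nat.mul_comm]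
end

section
/- For every two-element set Σ = {2, n} with n ≥ 3, there exists a numerical semigroup T and an element x ∈ T such that the set of lengths of factorizations of x into atoms of T equals Σ. Concretely, T = ⟨7, 7+n, 7n−(7+n)⟩ works when gcd(n,7) = 1 (and more generally T = ⟨k, k+n, kn−(k+n)⟩ for any k ≥ 7 coprime to n), with x = kn. -/
lemma mem_closure_triple {a b c m : ℕ} :
    m ∈ AddSubmonoid.closure ({a, b, c} : Set ℕ) ↔ ∃ x y z : ℕ, x * a + y * b + z * c = m := by
  constructor
  · intro hm
    induction hm using AddSubmonoid.closure_induction with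
    | mem g hg =>
      rcases hg with rfl | rfl | rfl
      · exact ⟨1, 0, 0, by ring⟩
      · exact ⟨0, 1, 0, by ring⟩
      · exact ⟨0, 0, 1, by ring⟩
    | zero => exact ⟨0, 0, 0, by ring⟩
    | add u v _ _ hu hv =>
      obtain ⟨x, y, z, rfl⟩ := hu
      obtain ⟨x', y', z', rfl⟩ := hv
      exact ⟨x + x', y + y', z + z', by ring⟩
  · rintro ⟨x, y, z, rfl⟩
    have ha : a ∈ AddSubmonoid.closure ({a, b, c} : Set ℕ) :=
      AddSubmonoid.subset_closure (by simp)
    have hb : b ∈ AddSubmonoid.closure ({a, b, c} : Set ℕ) :=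
      AddSubmonoid.subset_closure (by simp)
    have hc : c ∈ AddSubmonoid.closure ({a, b, c} : Set ℕ) :=
      AddSubmonoid.subset_closure (by simp)
    have h1 := AddSubmonoid.nsmul_mem _ ha x
    have h2 := AddSubmonoid.nsmul_mem _ hb y
    have h3 := AddSubmonoid.nsmul_mem _ hc z
    simp only [smul_eq_mul] at h1 h2 h3
    exact AddSubmonoid.add_mem _ (AddSubmonoid.add_mem _ h1 h2) h3

lemma combo_pos {a b c x y z : ℕ} (ha : 1 ≤ a) (hb : 1 ≤ b) (hc : 1 ≤ c)
    (h : 1 ≤ x + y + z) : 1 ≤ x * a + y * b + z * c := by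
  have h3 : 1 ≤ x ∨ 1 ≤ y ∨ 1 ≤ z := by omega
  rcases h3 with h | h | h
  · have : 1 * 1 ≤ x * a := Nat.mul_le_mul h ha
    omega
  · have : 1 * 1 ≤ y * b := Nat.mul_le_mul h hb
    omega
  · have : 1 * 1 ≤ z * c := Nat.mul_le_mul h hc
    omega

/-- In our situation, atoms are among the generators. -/
lemma atom_mem {a b c m : ℕ} (ha : 1 ≤ a) (hb : 1 ≤ b) (hc : 1 ≤ c)
    (hm : NumAtom (AddSubmonoid.closure ({a, b, c} : Set ℕ)) m) :
    m = a ∨ m = b ∨ m = c := by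
  obtain ⟨hmT, hm0, hmsum⟩ := hm
  obtain ⟨x, y, z, hxyz⟩ := mem_closure_triple.mp hmT
  rcases Nat.lt_or_ge (x + y + z) 2 with h2 | h2
  · have h01 : (x = 0 ∧ y = 0 ∧ z = 0) ∨ (x = 1 ∧ y = 0 ∧ z = 0) ∨
        (x = 0 ∧ y = 1 ∧ z = 0) ∨ (x = 0 ∧ y = 0 ∧ z = 1) := by omega
    rcases h01 with ⟨rfl, rfl, rfl⟩ | ⟨rfl, rfl, rfl⟩ | ⟨rfl, rfl, rfl⟩ | ⟨rfl, rfl, rfl⟩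
    · omega
    · left; omega
    · right; left; omega
    · right; right; omega
  · exfalso
    apply hmsum
    have h3 : 1 ≤ x ∨ (x = 0 ∧ 1 ≤ y) ∨ (x = 0 ∧ y = 0 ∧ 1 ≤ z) := by omega
    rcases h3 with h | ⟨rfl, h⟩ | ⟨rfl, rfl, h⟩
    · obtain ⟨x', rfl⟩ : ∃ x', x = x' + 1 := ⟨x - 1, by omega⟩
      refine ⟨a, x' * a + y * b + z * c, AddSubmonoid.subset_closure (by simp),
        mem_closure_triple.mpr ⟨x', y, z, rfl⟩, by omega, ?_, ?_⟩
      · have := combo_pos (x := x') (y := y) (z := z) ha hb hc (by omega)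
        omega
      · rw [← hxyz]; ring
    · obtain ⟨y', rfl⟩ : ∃ y', y = y' + 1 := ⟨y - 1, by omega⟩
      refine ⟨b, 0 * a + y' * b + z * c, AddSubmonoid.subset_closure (by simp),
        mem_closure_triple.mpr ⟨0, y', z, rfl⟩, by omega, ?_, ?_⟩
      · have := combo_pos (x := 0) (y := y') (z := z) ha hb hc (by omega)
        omega
      · rw [← hxyz]; ring
    · obtain ⟨z', rfl⟩ : ∃ z', z = z' + 1 := ⟨z - 1, by omega⟩
      refine ⟨c, 0 * a + 0 * b + z' * c, AddSubmonoid.subset_closure (by simp),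
        mem_closure_triple.mpr ⟨0, 0, z', rfl⟩, by omega, ?_, ?_⟩
      · have := combo_pos (x := 0) (y := 0) (z := z') ha hb hc (by omega)
        omega
      · rw [← hxyz]; ring

lemma multiset_combo {a b c : ℕ} (s : Multiset ℕ) (h : ∀ m ∈ s, m = a ∨ m = b ∨ m = c) :
    ∃ x y z : ℕ, x + y + z = Multiset.card s ∧ x * a + y * b + z * c = s.sum := by
  induction s using Multiset.induction with
  | empty => exact ⟨0, 0, 0, by simp, by simp⟩
  | cons m s ih =>
    obtain ⟨x, y, z, h1, h2⟩ := ih (fun m' hm' => h m' (Multiset.mem_cons_of_mem hm'))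
    rcases h m (Multiset.mem_cons_self _ _) with rfl | rfl | rfl
    · exact ⟨x + 1, y, z, by simp [← h1]; ring, by simp [← h2]; ring⟩
    · exact ⟨x, y + 1, z, by simp [← h1]; ring, by simp [← h2]; ring⟩
    · exact ⟨x, y, z + 1, by simp [← h1]; ring, by simp [← h2]; ring⟩

lemma core {n k x y z c : ℕ} (hn : 3 ≤ n) (hk : 7 ≤ k) (hco : Nat.Coprime k n)
    (hc : k + n + c = k * n)
    (h : x * k + y * (k + n) + z * c = k * n) : x + y + z = 2 ∨ x + y + z = n := by
  have hcb : k + n + 1 ≤ c := by nlinarith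
  rcases Nat.lt_or_ge z 2 with hz | hz
  · rcases Nat.lt_or_ge z 1 with hz0 | hz0
    · have hz0 : z = 0 := by omega
      subst hz0
      have he : (x + y) * k + y * n = k * n := by rw [← h]; ring
      have h1 : k ∣ (x + y) * k + y * n := he ▸ dvd_mul_right k n
      have hd : k ∣ y * n := (Nat.dvd_add_right (dvd_mul_left k (x + y))).mp h1
      have hky : k ∣ y := hco.dvd_of_dvd_mul_right hd
      rcases Nat.eq_zero_or_pos y with rfl | hy
      · right
        have : x * k = n * k := by rw [mul_comm n k, ← h]; ring
        have := Nat.eq_of_mul_eq_mul_right (by omega : 0 < k) this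
        omega
      · exfalso
        have hyk : k ≤ y := Nat.le_of_dvd hy hky
        have := Nat.mul_le_mul hyk (le_refl (k + n))
        nlinarith
    · have hz1 : z = 1 := by omega
      subst hz1
      have h' : x * k + y * (k + n) = k + n := by omega
      rcases Nat.lt_or_ge y 2 with hy | hy
      · rcases Nat.lt_or_ge y 1 with hy0 | hy0
        · have hy0 : y = 0 := by omega
          subst hy0
          exfalso
          have hd : k ∣ k + n := by
            have : x * k = k + n := by omega
            exact this ▸ dvd_mul_left k x
          have : k ∣ n := (Nat.dvd_add_right dvd_rfl).mp hd
          have : k ∣ 1 := hco ▸ Nat.dvd_gcd dvd_rfl this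
          have := Nat.le_of_dvd one_pos this
          omega
        · have hy1 : y = 1 := by omega
          subst hy1
          have : x * k = 0 := by omega
          have hx : x = 0 := by
            rcases Nat.mul_eq_zero.mp this with h | h
            · exact h
            · omega
          omega
      · exfalso
        have := Nat.mul_le_mul hy (le_refl (k + n))
        omega
  · exfalso
    have := Nat.mul_le_mul hz (le_refl c)
    omega

lemma min_elt {n k c m : ℕ} (hn : 3 ≤ n) (hcb : k + n + 1 ≤ c)
    (hm : m ∈ AddSubmonoid.closure ({k, k + n, c} : Set ℕ)) (hm0 : m ≠ 0) : k ≤ m := by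
  obtain ⟨x, y, z, rfl⟩ := mem_closure_triple.mp hm
  have h1 : 1 ≤ x + y + z := by
    by_contra h
    push_neg at h
    have : x = 0 ∧ y = 0 ∧ z = 0 := by omega
    obtain ⟨rfl, rfl, rfl⟩ := this
    simp at hm0
  rcases (by omega : 1 ≤ x ∨ 1 ≤ y ∨ 1 ≤ z) with h | h | h
  · have : 1 * k ≤ x * k := Nat.mul_le_mul h (le_refl k)
    omega
  · have : 1 * (k + n) ≤ y * (k + n) := Nat.mul_le_mul h (le_refl _)
    omega
  · have : 1 * c ≤ z * c := Nat.mul_le_mul h (le_refl _)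
    omega

lemma atom_k {n k c : ℕ} (hn : 3 ≤ n) (hk : 7 ≤ k)
    (hcb : k + n + 1 ≤ c) :
    NumAtom (AddSubmonoid.closure ({k, k + n, c} : Set ℕ)) k := by
  refine ⟨AddSubmonoid.subset_closure (by simp), by omega, ?_⟩
  rintro ⟨u, v, hu, hv, hu0, hv0, heq⟩
  have h1 := min_elt hn hcb hu hu0
  have h2 := min_elt hn hcb hv hv0
  omega

lemma atom_b {n k c : ℕ} (hn : 3 ≤ n) (hk : 7 ≤ k) (hco : Nat.Coprime k n)
    (hcb : k + n + 1 ≤ c) :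
    NumAtom (AddSubmonoid.closure ({k, k + n, c} : Set ℕ)) (k + n) := by
  refine ⟨AddSubmonoid.subset_closure (by simp), by omega, ?_⟩
  rintro ⟨u, v, hu, hv, hu0, hv0, heq⟩
  have h1 := min_elt hn hcb hu hu0
  have h2 := min_elt hn hcb hv hv0
  obtain ⟨x, y, z, hxyz⟩ := mem_closure_triple.mp hu
  obtain ⟨x', y', z', hxyz'⟩ := mem_closure_triple.mp hv
  have hy : y = 0 := by
    by_contra hy
    have : 1 * (k + n) ≤ y * (k + n) := Nat.mul_le_mul (by omega) (le_refl _)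
    omega
  have hz : z = 0 := by
    by_contra hz
    have : 1 * c ≤ z * c := Nat.mul_le_mul (by omega) (le_refl _)
    omega
  have hy' : y' = 0 := by
    by_contra hy'
    have : 1 * (k + n) ≤ y' * (k + n) := Nat.mul_le_mul (by omega) (le_refl _)
    omega
  have hz' : z' = 0 := by
    by_contra hz'
    have : 1 * c ≤ z' * c := Nat.mul_le_mul (by omega) (le_refl _)
    omega
  subst hy hz hy' hz'
  have hku : k ∣ u := by rw [← hxyz]; simp [dvd_mul_left]
  have hkv : k ∣ v := by rw [← hxyz']; simp [dvd_mul_left]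
  have hkn : k ∣ n := by
    have : k ∣ k + n := heq ▸ Nat.dvd_add hku hkv
    exact (Nat.dvd_add_right dvd_rfl).mp this
  have : k ∣ 1 := hco ▸ Nat.dvd_gcd dvd_rfl hkn
  have := Nat.le_of_dvd one_pos this
  omega

lemma atom_c {n k c : ℕ} (hn : 3 ≤ n) (hk : 7 ≤ k) (hco : Nat.Coprime k n)
    (hcb : k + n + 1 ≤ c) (hc : k + n + c = k * n) :
    NumAtom (AddSubmonoid.closure ({k, k + n, c} : Set ℕ)) c := by
  refine ⟨AddSubmonoid.subset_closure (by simp), by omega, ?_⟩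
  rintro ⟨u, v, hu, hv, hu0, hv0, heq⟩
  have h1 := min_elt hn hcb hu hu0
  have h2 := min_elt hn hcb hv hv0
  obtain ⟨x, y, z, hxyz⟩ := mem_closure_triple.mp hu
  obtain ⟨x', y', z', hxyz'⟩ := mem_closure_triple.mp hv
  have hz : z = 0 := by
    by_contra hz
    have : 1 * c ≤ z * c := Nat.mul_le_mul (by omega) (le_refl _)
    omega
  have hz' : z' = 0 := by
    by_contra hz'
    have : 1 * c ≤ z' * c := Nat.mul_le_mul (by omega) (le_refl _)
    omega
  subst hz hz'
  have he : (x + x') * k + (y + y') * (k + n) = c := by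
    rw [heq, ← hxyz, ← hxyz']; ring
  set X := x + x' with hX
  set Y := y + y' with hY
  have he2 : (Y + 1) * n + (X + Y + 1) * k = k * n := by
    rw [← hc, ← he]; ring
  have h1 : k ∣ (Y + 1) * n + (X + Y + 1) * k := he2 ▸ dvd_mul_right k n
  have hd : k ∣ (Y + 1) * n := by
    rw [add_comm] at h1
    exact (Nat.dvd_add_right (dvd_mul_left k (X + Y + 1))).mp h1
  have hkY : k ∣ Y + 1 := hco.dvd_of_dvd_mul_right hd
  have hYk : k ≤ Y + 1 := Nat.le_of_dvd (by omega) hkY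
  have hmul : k * (k + n) ≤ (Y + 1) * (k + n) := Nat.mul_le_mul hYk (le_refl _)
  nlinarith

lemma cofinite {n k : ℕ} (hn : 3 ≤ n) (hk : 7 ≤ k) (hco : Nat.Coprime k n) (c : ℕ) :
    Set.Finite {m : ℕ | m ∉ AddSubmonoid.closure ({k, k + n, c} : Set ℕ)} := by
  apply Set.Finite.subset (Set.finite_Iio ((k + n) * k))
  intro m hm
  simp only [Set.mem_setOf_eq] at hm
  rw [Set.mem_Iio]
  by_contra hge
  push_neg at hge
  apply hm
  haveI : NeZero (k + n) := ⟨by omega⟩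
  have hcop : Nat.Coprime k (k + n) := by
    simpa [Nat.Coprime] using Nat.coprime_add_self_right.mpr hco
  set u := ZMod.unitOfCoprime k hcop with hu
  set x := ((u⁻¹ : (ZMod (k + n))ˣ) * (m : ZMod (k + n))).val with hxdef
  have hxcast : ((x : ℕ) : ZMod (k + n)) = (u⁻¹ : (ZMod (k + n))ˣ) * (m : ZMod (k + n)) :=
    ZMod.natCast_rightInverse _
  have hxk : ((x * k : ℕ) : ZMod (k + n)) = ((m : ℕ) : ZMod (k + n)) := by
    push_cast
    rw [hxcast, mul_comm ((u⁻¹ : (ZMod (k + n))ˣ) : ZMod (k + n)) (m : ZMod (k + n)),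
      mul_assoc]
    have : ((u⁻¹ : (ZMod (k + n))ˣ) : ZMod (k + n)) * (k : ZMod (k + n)) = 1 := by
      rw [← ZMod.coe_unitOfCoprime k hcop, ← hu, ← Units.val_mul, inv_mul_cancel, Units.val_one]
    rw [this, mul_one]
  have hmod : x * k ≡ m [MOD k + n] := (ZMod.natCast_eq_natCast_iff _ _ _).mp hxk
  have hxlt : x < k + n := ZMod.val_lt _
  have hle : x * k ≤ m := by
    have : x * k ≤ (k + n) * k := Nat.mul_le_mul (by omega) (le_refl k)
    omega
  obtain ⟨y, hy⟩ := (Nat.modEq_iff_dvd' hle).mp hmod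
  refine mem_closure_triple.mpr ⟨x, y, 0, ?_⟩
  have : y * (k + n) = (k + n) * y := mul_comm _ _
  omega

lemma main_lemma {n k : ℕ} (hn : 3 ≤ n) (hk : 7 ≤ k) (hgcd : Nat.gcd n k = 1) :
    (Set.Finite {m : ℕ | m ∉ AddSubmonoid.closure {k, k + n, k * n - (k + n)}}) ∧
      k * n ∈ AddSubmonoid.closure {k, k + n, k * n - (k + n)} ∧
      AS (AddSubmonoid.closure {k, k + n, k * n - (k + n)}) (k * n) = {2, n} := by
  have hco : Nat.Coprime k n := Nat.Coprime.symm hgcd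
  have hle : k + n + (k + n + 1) ≤ k * n := by nlinarith
  obtain ⟨c, hceq⟩ : ∃ c, k * n - (k + n) = c := ⟨k * n - (k + n), rfl⟩
  rw [hceq]
  have hc : k + n + c = k * n := by omega
  have hcb : k + n + 1 ≤ c := by omega
  refine ⟨cofinite hn hk hco c, mem_closure_triple.mpr ⟨0, 1, 1, by omega⟩, ?_⟩
  ext m
  simp only [AS, Set.mem_setOf_eq, Set.mem_insert_iff, Set.mem_singleton_iff]
  constructor
  · rintro ⟨s, hat, hcard, hsum⟩
    have hall : ∀ a ∈ s, a = k ∨ a = k + n ∨ a = c :=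
      fun a ha => atom_mem (by omega) (by omega) (by omega) (hat a ha)
    obtain ⟨x, y, z, hxyz, hsum'⟩ := multiset_combo s hall
    have := core hn hk hco hc (by rw [hsum', hsum])
    omega
  · rintro (rfl | rfl)
    · refine ⟨{k + n, c}, ?_, by simp, by simp; omega⟩
      intro a ha
      simp only [Multiset.insert_eq_cons, Multiset.mem_cons, Multiset.mem_singleton] at ha
      rcases ha with rfl | rfl
      · exact atom_b hn hk hco hcb
      · exact atom_c hn hk hco hcb hc
    · refine ⟨Multiset.replicate m k, ?_, by simp, ?_⟩
      · intro a ha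
        rw [Multiset.eq_of_mem_replicate ha]
        exact atom_k hn hk hcb
      · simp [Multiset.sum_replicate, smul_eq_mul, mul_comm]

theorem stmt_8 (n : ℕ) (hn : 3 ≤ n) :
    (∃ T : AddSubmonoid ℕ, (Set.Finite {m : ℕ | m ∉ T}) ∧ ∃ x ∈ T, AS T x = {2, n}) ∧
      ∀ k : ℕ, 7 ≤ k → Nat.gcd n k = 1 →
        (Set.Finite {m : ℕ | m ∉ AddSubmonoid.closure {k, k + n, k * n - (k + n)}}) ∧
          k * n ∈ AddSubmonoid.closure {k, k + n, k * n - (k + n)} ∧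
          AS (AddSubmonoid.closure {k, k + n, k * n - (k + n)}) (k * n) = {2, n} := by
  constructor
  · obtain ⟨p, hple, hp⟩ := Nat.exists_infinite_primes (max n 7 + 1)
    have hk : 7 ≤ p := by omega
    have hnp : n < p := by omega
    have hgcd : Nat.gcd n p = 1 := by
      have hnd : ¬ p ∣ n := fun hdvd => absurd (Nat.le_of_dvd (by omega) hdvd) (by omega)
      exact Nat.Coprime.symm ((Nat.Prime.coprime_iff_not_dvd hp).mpr hnd)
    obtain ⟨hfin, hmem, hAS⟩ := main_lemma hn hk hgcd
    exact ⟨_, hfin, _, hmem, hAS⟩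
  · intro k hk hgcd
    exact main_lemma hn hk hgcd
end

section
/- Let n ≥ 3 and t ≥ n+1. Then in the submonoid T = ⟨tn², tn²+n, t²n+1, t²n+n+1, t²n²−t²n−1⟩ of ℕ, the element t²n+1 is an atom; in particular there are no α, β ∈ ℕ with t²n+1 = α·tn² + β·(tn²+n). -/
lemma rep_of_mem {g1 g2 g3 g4 g5 x : ℕ}
    (hx : x ∈ AddSubmonoid.closure ({g1, g2, g3, g4, g5} : Set ℕ)) :
    ∃ a b c d e : ℕ, x = a*g1 + b*g2 + c*g3 + d*g4 + e*g5 := by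
  induction hx using AddSubmonoid.closure_induction with
  | mem y hy =>
    simp only [Set.mem_insert_iff, Set.mem_singleton_iff] at hy
    rcases hy with h|h|h|h|h <;> subst h
    · exact ⟨1,0,0,0,0, by ring⟩
    · exact ⟨0,1,0,0,0, by ring⟩
    · exact ⟨0,0,1,0,0, by ring⟩
    · exact ⟨0,0,0,1,0, by ring⟩
    · exact ⟨0,0,0,0,1, by ring⟩
  | zero => exact ⟨0,0,0,0,0, by ring⟩
  | add x y _ _ hx hy =>
    obtain ⟨a,b,c,d,e,rfl⟩ := hx
    obtain ⟨a',b',c',d',e',rfl⟩ := hy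
    exact ⟨a+a', b+b', c+c', d+d', e+e', by ring⟩

lemma key (n t a b c d e : ℕ) (hn : 3 ≤ n) (ht : n + 1 ≤ t)
    (h : a*(t*n^2) + b*(t*n^2+n) + c*(t^2*n+1) + d*(t^2*n+n+1)
        + e*(t^2*n^2 - t^2*n - 1) = t^2*n+1) :
    a = 0 ∧ b = 0 ∧ c = 1 ∧ d = 0 ∧ e = 0 := by
  have ht4 : 4 ≤ t := by omega
  have hA : 48 ≤ t^2*n := by nlinarith
  -- g5 is big
  have hg5 : t^2*n + 1 < t^2*n^2 - t^2*n - 1 := by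
    have h1 : (t^2*n)*3 ≤ (t^2*n)*n := Nat.mul_le_mul_left _ hn
    have h2 : t^2*n^2 = (t^2*n)*n := by ring
    omega
  -- e = 0
  have he : e = 0 := by
    by_contra he
    have : t^2*n^2 - t^2*n - 1 ≤ e*(t^2*n^2 - t^2*n - 1) :=
      Nat.le_mul_of_pos_left _ (Nat.pos_of_ne_zero he)
    omega
  -- d = 0
  have hd : d = 0 := by
    by_contra hd
    have : t^2*n + n + 1 ≤ d*(t^2*n+n+1) := Nat.le_mul_of_pos_left _ (Nat.pos_of_ne_zero hd)
    omega
  subst he hd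
  simp only [Nat.zero_mul, Nat.mul_zero, Nat.add_zero, Nat.zero_add] at h
  -- c ≤ 1
  have hc1 : c ≤ 1 := by
    by_contra hc
    have : 2*(t^2*n+1) ≤ c*(t^2*n+1) := Nat.mul_le_mul_right _ (by omega)
    omega
  interval_cases c
  · -- c = 0 : mod n contradiction
    exfalso
    simp only [Nat.zero_mul, Nat.mul_zero, Nat.add_zero, Nat.zero_add] at h
    have hk : a*(t*n^2) + b*(t*n^2+n) = n*(a*(t*n) + b*(t*n) + b) := by ring
    have h2 : n*(a*(t*n) + b*(t*n) + b) = n*(t^2) + 1 := by rw [← hk, h]; ring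
    have h3 : (n*(a*(t*n) + b*(t*n) + b)) % n = (n*(t^2) + 1) % n := by rw [h2]
    rw [Nat.mul_mod_right, Nat.mul_add_mod, Nat.mod_eq_of_lt (show 1 < n by omega)] at h3
    exact absurd h3 (by omega)
  · -- c = 1
    have ha : a*(t*n^2) = 0 ∧ b*(t*n^2+n) = 0 := by omega
    have hn2 : 0 < t*n^2 := by positivity
    constructor
    · rcases Nat.mul_eq_zero.mp ha.1 with h'|h' <;> omega
    refine ⟨?_, rfl, rfl, rfl⟩
    rcases Nat.mul_eq_zero.mp ha.2 with h'|h' <;> omega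

theorem stmt_9 (n t : ℕ) (hn : 3 ≤ n) (ht : n + 1 ≤ t) :
    NumAtom (AddSubmonoid.closure
        {t * n ^ 2, t * n ^ 2 + n, t ^ 2 * n + 1, t ^ 2 * n + n + 1,
          t ^ 2 * n ^ 2 - t ^ 2 * n - 1}) (t ^ 2 * n + 1) ∧
      ¬ ∃ α β : ℕ, t ^ 2 * n + 1 = α * (t * n ^ 2) + β * (t * n ^ 2 + n) := by
  constructor
  · refine ⟨AddSubmonoid.subset_closure (by simp), by positivity, ?_⟩
    rintro ⟨u, v, hu, hv, hu0, hv0, huv⟩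
    obtain ⟨a,b,c,d,e,rfl⟩ := rep_of_mem hu
    obtain ⟨a',b',c',d',e',rfl⟩ := rep_of_mem hv
    have h : (a+a')*(t*n^2) + (b+b')*(t*n^2+n) + (c+c')*(t^2*n+1)
        + (d+d')*(t^2*n+n+1) + (e+e')*(t^2*n^2 - t^2*n - 1) = t^2*n+1 := by
      exact Eq.trans (by ring) huv.symm
    obtain ⟨ha, hb, hc, hd, he⟩ := key n t _ _ _ _ _ hn ht h
    have ha0 : a = 0 ∧ a' = 0 := by omega
    have hb0 : b = 0 ∧ b' = 0 := by omega
    have hd0 : d = 0 ∧ d' = 0 := by omega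
    have he0 : e = 0 ∧ e' = 0 := by omega
    rcases (by omega : c = 0 ∨ c' = 0) with h'|h'
    · apply hu0; simp [ha0.1, hb0.1, h', hd0.1, he0.1]
    · apply hv0; simp [ha0.2, hb0.2, h', hd0.2, he0.2]
  · rintro ⟨α, β, hab⟩
    have h : α*(t*n^2) + β*(t*n^2+n) + 0*(t^2*n+1) + 0*(t^2*n+n+1)
        + 0*(t^2*n^2 - t^2*n - 1) = t^2*n+1 := by omega
    obtain ⟨-, -, hc, -, -⟩ := key n t _ _ _ _ _ hn ht h
    exact absurd hc (by omega)
end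

section
/- Let n ≥ 3 and t ≥ n+1. There are no α, β, γ ∈ ℕ with t²n+n+1 = α·tn² + β·(tn²+n) + γ·(t²n+1); hence t²n+n+1 is an atom of the submonoid of ℕ generated by tn², tn²+n, t²n+1, t²n+n+1, t²n²−t²n−1. -/
lemma mem5 {a1 a2 a3 a4 a5 x : ℕ}
    (hx : x ∈ AddSubmonoid.closure ({a1, a2, a3, a4, a5} : Set ℕ)) :
    ∃ c1 c2 c3 c4 c5 : ℕ, x = c1*a1 + c2*a2 + c3*a3 + c4*a4 + c5*a5 := by
  induction hx using AddSubmonoid.closure_induction with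
  | mem y hy =>
    simp only [Set.mem_insert_iff, Set.mem_singleton_iff] at hy
    rcases hy with h|h|h|h|h
    · exact ⟨1,0,0,0,0, by simp [h]⟩
    · exact ⟨0,1,0,0,0, by simp [h]⟩
    · exact ⟨0,0,1,0,0, by simp [h]⟩
    · exact ⟨0,0,0,1,0, by simp [h]⟩
    · exact ⟨0,0,0,0,1, by simp [h]⟩
  | zero => exact ⟨0,0,0,0,0, by simp⟩
  | add y z _ _ hy hz =>
    obtain ⟨c1,c2,c3,c4,c5,h1⟩ := hy
    obtain ⟨d1,d2,d3,d4,d5,h2⟩ := hz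
    exact ⟨c1+d1, c2+d2, c3+d3, c4+d4, c5+d5, by rw [h1, h2]; ring⟩

theorem stmt_10 (n t : ℕ) (hn : 3 ≤ n) (ht : n + 1 ≤ t) :
    (¬ ∃ α β γ : ℕ, t ^ 2 * n + n + 1 =
        α * (t * n ^ 2) + β * (t * n ^ 2 + n) + γ * (t ^ 2 * n + 1)) ∧
      NumAtom (AddSubmonoid.closure
        {t * n ^ 2, t * n ^ 2 + n, t ^ 2 * n + 1, t ^ 2 * n + n + 1,
          t ^ 2 * n ^ 2 - t ^ 2 * n - 1}) (t ^ 2 * n + n + 1) := by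
  have ht4 : 4 ≤ t := by omega
  -- basic size facts
  have h16 : 16 ≤ t ^ 2 := by nlinarith
  have hQ16 : 16 * n ≤ t ^ 2 * n := Nat.mul_le_mul_right n h16
  have hPn : n < t * n ^ 2 := by nlinarith
  -- the big generator exceeds D
  have hbig : 2 * (t ^ 2 * n) + n + 3 ≤ t ^ 2 * n ^ 2 := by nlinarith
  have hE : t ^ 2 * n + n + 2 ≤ t ^ 2 * n ^ 2 - t ^ 2 * n - 1 := by
    generalize t ^ 2 * n ^ 2 = v at hbig ⊢
    generalize t ^ 2 * n = u at hbig ⊢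
    omega
  -- Part 1
  have part1 : ¬ ∃ α β γ : ℕ, t ^ 2 * n + n + 1 =
      α * (t * n ^ 2) + β * (t * n ^ 2 + n) + γ * (t ^ 2 * n + 1) := by
    rintro ⟨a, b, c, h⟩
    have ha1 : a * (t * n ^ 2) ≤ t ^ 2 * n + n + 1 := by
      rw [h]; exact le_trans (Nat.le_add_right _ _) (Nat.le_add_right _ _)
    have hb1 : b * (t * n ^ 2 + n) ≤ t ^ 2 * n + n + 1 := by
      rw [h]; exact le_trans (Nat.le_add_left _ _) (Nat.le_add_right _ _)
    have hc0 : c * (t ^ 2 * n + 1) ≤ t ^ 2 * n + n + 1 := by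
      rw [h]; exact Nat.le_add_left _ _
    have hc1 : c ≤ 1 := by
      by_contra hc
      push_neg at hc
      have h2 : 2 * (t ^ 2 * n + 1) ≤ c * (t ^ 2 * n + 1) :=
        Nat.mul_le_mul_right _ hc
      linarith
    interval_cases c
    · -- c = 0 : divisibility by n
      have hdvd : n ∣ t ^ 2 * n + n + 1 := by
        rw [h]
        exact dvd_add (dvd_add ⟨a * (t * n), by ring⟩ ⟨b * (t * n + 1), by ring⟩)
          (by simp)
      have h1 : n ∣ t ^ 2 * n + n := ⟨t ^ 2 + 1, by ring⟩
      have hone : n ∣ 1 := (Nat.dvd_add_right h1).mp hdvd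
      have := Nat.le_of_dvd one_pos hone
      omega
    · -- c = 1
      have h'' : a * (t * n ^ 2) + b * (t * n ^ 2 + n) + (t ^ 2 * n + 1)
          = n + (t ^ 2 * n + 1) := by
        rw [show a * (t * n ^ 2) + b * (t * n ^ 2 + n) + (t ^ 2 * n + 1)
            = a * (t * n ^ 2) + b * (t * n ^ 2 + n) + 1 * (t ^ 2 * n + 1) by ring,
          ← h]; ring
      have key : a * (t * n ^ 2) + b * (t * n ^ 2 + n) = n :=
        Nat.add_right_cancel h''
      rcases Nat.eq_zero_or_pos a with rfl | hapos
      · rcases Nat.eq_zero_or_pos b with rfl | hbpos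
        · simp at key; omega
        · have h3 : t * n ^ 2 + n ≤ b * (t * n ^ 2 + n) :=
            Nat.le_mul_of_pos_left _ hbpos
          have h4 : b * (t * n ^ 2 + n) ≤ n :=
            le_trans (Nat.le_add_left _ _) key.le
          linarith
      · have h3 : t * n ^ 2 ≤ a * (t * n ^ 2) := Nat.le_mul_of_pos_left _ hapos
        have h4 : a * (t * n ^ 2) ≤ n :=
          le_trans (Nat.le_add_right _ _) key.le
        linarith
  refine ⟨part1, ?_⟩
  unfold NumAtom
  refine ⟨AddSubmonoid.subset_closure (by simp), by positivity, ?_⟩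
  rintro ⟨b, c, hb, hc, hb0, hc0, hbc⟩
  obtain ⟨a1, b1, c1, d1, e1, h1⟩ := mem5 hb
  obtain ⟨a2, b2, c2, d2, e2, h2⟩ := mem5 hc
  have hbpos : 1 ≤ b := Nat.one_le_iff_ne_zero.mpr hb0
  have hcpos : 1 ≤ c := Nat.one_le_iff_ne_zero.mpr hc0
  set D := t ^ 2 * n + n + 1 with hD
  set E := t ^ 2 * n ^ 2 - t ^ 2 * n - 1 with hEdef
  rcases Nat.eq_zero_or_pos d1 with hd1 | hd1
  · rcases Nat.eq_zero_or_pos d2 with hd2 | hd2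
    · rcases Nat.eq_zero_or_pos e1 with he1 | he1
      · rcases Nat.eq_zero_or_pos e2 with he2 | he2
        · -- all of d1,d2,e1,e2 zero: contradicts part1
          subst hd1 hd2 he1 he2
          simp only [Nat.mul_zero, Nat.zero_mul, Nat.add_zero] at h1 h2
          exact part1 ⟨a1 + a2, b1 + b2, c1 + c2, by rw [hbc, h1, h2]; ring⟩
        · have hE2 : E ≤ e2 * E := Nat.le_mul_of_pos_left _ he2
          have hle : e2 * E ≤ c := by rw [h2]; exact Nat.le_add_left _ _
          linarith
      · have hE1 : E ≤ e1 * E := Nat.le_mul_of_pos_left _ he1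
        have hle : e1 * E ≤ b := by rw [h1]; exact Nat.le_add_left _ _
        linarith
    · have hD2 : D ≤ d2 * D := Nat.le_mul_of_pos_left _ hd2
      have hle : d2 * D ≤ c := by
        rw [h2]; exact le_trans (Nat.le_add_left _ _) (Nat.le_add_right _ _)
      linarith
  · have hD1 : D ≤ d1 * D := Nat.le_mul_of_pos_left _ hd1
    have hle : d1 * D ≤ b := by
      rw [h1]; exact le_trans (Nat.le_add_left _ _) (Nat.le_add_right _ _)
    linarith
end

section
/- Let n ≥ 3 and t ≥ n+1. There are no α, β, γ, δ ∈ ℕ with t²n² − t²n − 1 = α·tn² + β·(tn²+n) + γ·(t²n+1) + δ·(t²n+n+1); hence t²n²−t²n−1 is an atom of the submonoid of ℕ generated by tn², tn²+n, t²n+1, t²n+n+1, t²n²−t²n−1. -/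
lemma combo5 {a b c d e z : ℕ}
    (hz : z ∈ AddSubmonoid.closure ({a, b, c, d, e} : Set ℕ)) :
    ∃ p q r s u : ℕ, z = p * a + q * b + r * c + s * d + u * e := by
  induction hz using AddSubmonoid.closure_induction with
  | mem x hx =>
    simp only [Set.mem_insert_iff, Set.mem_singleton_iff] at hx
    rcases hx with rfl | rfl | rfl | rfl | rfl
    · exact ⟨1, 0, 0, 0, 0, by ring⟩
    · exact ⟨0, 1, 0, 0, 0, by ring⟩
    · exact ⟨0, 0, 1, 0, 0, by ring⟩
    · exact ⟨0, 0, 0, 1, 0, by ring⟩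
    · exact ⟨0, 0, 0, 0, 1, by ring⟩
  | zero => exact ⟨0, 0, 0, 0, 0, by ring⟩
  | add x y hx hy ihx ihy =>
    obtain ⟨p1, q1, r1, s1, u1, rfl⟩ := ihx
    obtain ⟨p2, q2, r2, s2, u2, rfl⟩ := ihy
    exact ⟨p1 + p2, q1 + q2, r1 + r2, s1 + s2, u1 + u2, by ring⟩

lemma part1 (n t : ℕ) (hn : 3 ≤ n) (ht : n + 1 ≤ t) :
    ¬ ∃ α β γ δ : ℕ, t ^ 2 * n ^ 2 - t ^ 2 * n - 1 =
        α * (t * n ^ 2) + β * (t * n ^ 2 + n) + γ * (t ^ 2 * n + 1) +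
          δ * (t ^ 2 * n + n + 1) := by
  rintro ⟨α, β, γ, δ, h⟩
  have ht4 : 4 ≤ t := by omega
  have hx1 : 0 < t ^ 2 * n := by positivity
  have hbig : t ^ 2 * n + 1 ≤ t ^ 2 * n ^ 2 := by nlinarith
  have key : t ^ 2 * n ^ 2 =
      α * (t * n ^ 2) + β * (t * n ^ 2 + n) + γ * (t ^ 2 * n + 1) +
        δ * (t ^ 2 * n + n + 1) + t ^ 2 * n + 1 := by omega
  have keyZ : (t : ℤ) ^ 2 * n ^ 2 =
      α * (t * n ^ 2) + β * (t * n ^ 2 + n) + γ * (t ^ 2 * n + 1) +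
        δ * (t ^ 2 * n + n + 1) + t ^ 2 * n + 1 := by exact_mod_cast key
  have hdvdZ : (n : ℤ) ∣ (γ : ℤ) + δ + 1 := by
    refine ⟨(t:ℤ) ^ 2 * n - α * (t * n) - β * (t * n) - β - γ * t ^ 2 - δ * t ^ 2 - δ - t ^ 2, ?_⟩
    linear_combination -keyZ
  have hdvd : n ∣ γ + δ + 1 := by exact_mod_cast hdvdZ
  have hge : n ≤ γ + δ + 1 := Nat.le_of_dvd (by omega) hdvd
  nlinarith [key, Nat.zero_le (α * (t * n ^ 2)), Nat.zero_le (β * (t * n ^ 2 + n)),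
    mul_le_mul_of_nonneg_left (le_refl (t ^ 2 * n + 1)) (Nat.zero_le γ)]

theorem stmt_11 (n t : ℕ) (hn : 3 ≤ n) (ht : n + 1 ≤ t) :
    (¬ ∃ α β γ δ : ℕ, t ^ 2 * n ^ 2 - t ^ 2 * n - 1 =
        α * (t * n ^ 2) + β * (t * n ^ 2 + n) + γ * (t ^ 2 * n + 1) +
          δ * (t ^ 2 * n + n + 1)) ∧
      NumAtom (AddSubmonoid.closure
        {t * n ^ 2, t * n ^ 2 + n, t ^ 2 * n + 1, t ^ 2 * n + n + 1,
          t ^ 2 * n ^ 2 - t ^ 2 * n - 1}) (t ^ 2 * n ^ 2 - t ^ 2 * n - 1) := by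
  refine ⟨part1 n t hn ht, ?_, ?_, ?_⟩
  · exact AddSubmonoid.subset_closure (by simp)
  · have ht4 : 4 ≤ t := by omega
    have hx1 : 0 < t ^ 2 * n := by positivity
    have hbig : t ^ 2 * n + 2 ≤ t ^ 2 * n ^ 2 := by nlinarith
    omega
  · rintro ⟨b, c, hb, hc, hb0, hc0, habc⟩
    have ht4 : 4 ≤ t := by omega
    have hx1 : 0 < t ^ 2 * n := by positivity
    have hbig : t ^ 2 * n + 2 ≤ t ^ 2 * n ^ 2 := by nlinarith
    have hM : 0 < t ^ 2 * n ^ 2 - t ^ 2 * n - 1 := by omega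
    obtain ⟨p1, q1, r1, s1, u1, rfl⟩ := combo5 hb
    obtain ⟨p2, q2, r2, s2, u2, rfl⟩ := combo5 hc
    set M := t ^ 2 * n ^ 2 - t ^ 2 * n - 1 with hMdef
    clear_value M
    by_cases hu : u1 + u2 = 0
    · obtain ⟨hu1, hu2⟩ : u1 = 0 ∧ u2 = 0 := by omega
      refine part1 n t hn ht ⟨p1 + p2, q1 + q2, r1 + r2, s1 + s2, ?_⟩
      subst hu1 hu2
      rw [← hMdef, habc]; ring
    · -- u1 + u2 ≥ 1
      have hS : (p1 + p2) * (t * n ^ 2) + (q1 + q2) * (t * n ^ 2 + n) +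
          (r1 + r2) * (t ^ 2 * n + 1) + (s1 + s2) * (t ^ 2 * n + n + 1) +
          (u1 + u2) * M = M := by
        conv_rhs => rw [habc]
        ring
      have hum : (u1 + u2) * M ≤ M := by omega
      have hu1' : u1 + u2 = 1 := by
        rcases Nat.lt_or_ge (u1 + u2) 2 with h2 | h2
        · omega
        · exfalso
          have : 2 * M ≤ (u1 + u2) * M := Nat.mul_le_mul_right M h2
          omega
      have hrest : (p1 + p2) * (t * n ^ 2) + (q1 + q2) * (t * n ^ 2 + n) +
          (r1 + r2) * (t ^ 2 * n + 1) + (s1 + s2) * (t ^ 2 * n + n + 1) = 0 := by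
        rw [hu1', one_mul] at hS; omega
      have hg1 : 0 < t * n ^ 2 := by positivity
      have hp : p1 + p2 = 0 ∧ q1 + q2 = 0 ∧ r1 + r2 = 0 ∧ s1 + s2 = 0 := by
        have e1 : (p1 + p2) * (t * n ^ 2) = 0 := by omega
        have e2 : (q1 + q2) * (t * n ^ 2 + n) = 0 := by omega
        have e3 : (r1 + r2) * (t ^ 2 * n + 1) = 0 := by omega
        have e4 : (s1 + s2) * (t ^ 2 * n + n + 1) = 0 := by omega
        rcases Nat.mul_eq_zero.mp e1 with h | h
        rcases Nat.mul_eq_zero.mp e2 with h' | h'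
        rcases Nat.mul_eq_zero.mp e3 with h'' | h''
        rcases Nat.mul_eq_zero.mp e4 with h''' | h'''
        all_goals omega
      obtain ⟨ep, eq, er, es⟩ := hp
      obtain ⟨rfl, rfl⟩ : p1 = 0 ∧ p2 = 0 := by omega
      obtain ⟨rfl, rfl⟩ : q1 = 0 ∧ q2 = 0 := by omega
      obtain ⟨rfl, rfl⟩ : r1 = 0 ∧ r2 = 0 := by omega
      obtain ⟨rfl, rfl⟩ : s1 = 0 ∧ s2 = 0 := by omega
      simp only [Nat.zero_mul, Nat.zero_add] at hb0 hc0
      rcases (by omega : u1 = 0 ∧ u2 = 1 ∨ u1 = 1 ∧ u2 = 0) with ⟨rfl, _⟩ | ⟨_, rfl⟩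
      · simp at hb0
      · simp at hc0
end

section
/- Let r ≥ 1, n ≥ r+2, t ≥ n+1, and let T''' = ⟨rtn², r(tn²+n), r(t²n+1), r(t²n+n+1), t²n²−t²n−1⟩. Then the set of lengths of factorizations of x''' = r(t²n²+n) into atoms of T''' is exactly {r+1, n, t}. Explicitly, the only solutions in ℕ of α·rtn² + β·r(tn²+n) + γ·r(t²n+1) + δ·r(t²n+n+1) + ε·(t²n²−t²n−1) = r(t²n²+n) are (0,0,n,0,0), (t−1,1,0,0,0), and (0,0,0,1,r). -/
set_option maxHeartbeats 4000000

private lemma stmt16_count (v1 v2 v3 v4 v5 : ℕ)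
    (h12 : v1 ≠ v2) (h13 : v1 ≠ v3) (h14 : v1 ≠ v4) (h15 : v1 ≠ v5)
    (h23 : v2 ≠ v3) (h24 : v2 ≠ v4) (h25 : v2 ≠ v5)
    (h34 : v3 ≠ v4) (h35 : v3 ≠ v5) (h45 : v4 ≠ v5)
    (l : List ℕ) (hl : ∀ y ∈ l, y = v1 ∨ y = v2 ∨ y = v3 ∨ y = v4 ∨ y = v5) :
    l.sum = l.count v1 * v1 + l.count v2 * v2 + l.count v3 * v3 + l.count v4 * v4 +
        l.count v5 * v5 ∧
      l.length = l.count v1 + l.count v2 + l.count v3 + l.count v4 + l.count v5 := by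
  induction l with
  | nil => simp
  | cons y l ih =>
    obtain ⟨hs, hln⟩ := ih (fun z hz => hl z (List.mem_cons_of_mem _ hz))
    have hy := hl y List.mem_cons_self
    rcases hy with rfl | rfl | rfl | rfl | rfl <;>
      constructor <;>
      simp [List.sum_cons, List.length_cons, List.count_cons,
        h12, h13, h14, h15, h23, h24, h25, h34, h35, h45,
        Ne.symm h12, Ne.symm h13, Ne.symm h14, Ne.symm h15, Ne.symm h23, Ne.symm h24,
        Ne.symm h25, Ne.symm h34, Ne.symm h35, Ne.symm h45] <;>
      first
        | linarith [hs]
        | omega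

private lemma stmt16_rep (r n t x : ℕ)
    (hx : x ∈ AddSubmonoid.closure
      ({r * (t * n ^ 2), r * (t * n ^ 2 + n), r * (t ^ 2 * n + 1),
        r * (t ^ 2 * n + n + 1), t ^ 2 * n ^ 2 - t ^ 2 * n - 1} : Set ℕ)) :
    ∃ l : List ℕ,
      (∀ y ∈ l, y = r * (t * n ^ 2) ∨ y = r * (t * n ^ 2 + n) ∨ y = r * (t ^ 2 * n + 1) ∨
        y = r * (t ^ 2 * n + n + 1) ∨ y = t ^ 2 * n ^ 2 - t ^ 2 * n - 1) ∧ l.sum = x := by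
  obtain ⟨l, hl, hsum⟩ := AddSubmonoid.exists_list_of_mem_closure hx
  exact ⟨l, fun y hy => by simpa [Set.mem_insert_iff] using hl y hy, hsum⟩

private lemma stmt16_lt (r n t : ℕ) (hr : 1 ≤ r) (hn : r + 2 ≤ n) (ht : n + 1 ≤ t) :
    0 < r * (t * n ^ 2) ∧
    r * (t * n ^ 2) < r * (t * n ^ 2 + n) ∧
    r * (t * n ^ 2 + n) < r * (t ^ 2 * n + 1) ∧
    r * (t ^ 2 * n + 1) < r * (t ^ 2 * n + n + 1) ∧
    r * (t ^ 2 * n + n + 1) < t ^ 2 * n ^ 2 - t ^ 2 * n - 1 ∧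
    r * n < r * (t * n ^ 2) ∧
    r * (t * n ^ 2 + n) < 2 * (r * (t * n ^ 2)) := by
  have hn3 : 3 ≤ n := by omega
  have ht4 : 4 ≤ t := by omega
  have hrn : 0 < r * n := Nat.mul_pos (by omega) (by omega)
  have htn2 : 0 < t * n ^ 2 := Nat.mul_pos (by omega) (pow_pos (by omega) 2)
  have h1 : 0 < r * (t * n ^ 2) := Nat.mul_pos (by omega) htn2
  have m2 : 4 * n ≤ t * n := Nat.mul_le_mul_right n ht4
  have m2' : 4 * (n^2) ≤ t * n ^ 2 := Nat.mul_le_mul_right (n^2) ht4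
  have mn : n * 1 ≤ n * n := Nat.mul_le_mul_left n (by omega)
  have hrn2 : r * n < r * (t * n ^ 2) := by
    have : n + 1 ≤ t * n ^ 2 := by nlinarith [m2', mn]
    calc r * n < r * n + r := by omega
    _ = r * (n + 1) := by ring
    _ ≤ r * (t * n ^ 2) := Nat.mul_le_mul_left r this
  have h12 : r * (t * n ^ 2) < r * (t * n ^ 2 + n) := by
    have : r * (t * n ^ 2 + n) = r * (t * n ^ 2) + r * n := by ring
    omega
  have m1 : (n + 1) * (t * n) ≤ t * (t * n) := Nat.mul_le_mul_right (t * n) ht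
  have m3 : t * n ^ 2 + n + 1 ≤ t ^ 2 * n := by nlinarith [m1, m2]
  have h23 : r * (t * n ^ 2 + n) < r * (t ^ 2 * n + 1) := by
    have k := Nat.mul_le_mul_left r m3
    nlinarith [k, hr]
  have h34 : r * (t ^ 2 * n + 1) < r * (t ^ 2 * n + n + 1) := by
    have : r * (t ^ 2 * n + n + 1) = r * (t ^ 2 * n + 1) + r * n := by ring
    omega
  have hsub : t ^ 2 * n + 1 ≤ t ^ 2 * n ^ 2 := by
    nlinarith [mul_le_mul_of_nonneg_left hn3 (Nat.zero_le (t ^ 2 * n))]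
  have ht2 : r + 2 ≤ t ^ 2 := by nlinarith
  have haux : r * n + r + 2 ≤ t ^ 2 * n := by
    nlinarith [mul_le_mul_of_nonneg_right ht2 (Nat.zero_le n)]
  have k1 : (r + 2) * (t ^ 2 * n) ≤ n * (t ^ 2 * n) := mul_le_mul_of_nonneg_right hn (Nat.zero_le _)
  have h45 : r * (t ^ 2 * n + n + 1) < t ^ 2 * n ^ 2 - t ^ 2 * n - 1 := by
    have hv4 : r * (t ^ 2 * n + n + 1) = r * (t ^ 2 * n) + r * n + r := by ring
    have k1' : (r + 2) * (t ^ 2 * n) = r * (t ^ 2 * n) + 2 * (t ^ 2 * n) := by ring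
    have k2 : n * (t ^ 2 * n) = t ^ 2 * n ^ 2 := by ring
    omega
  have h2v1 : r * (t * n ^ 2 + n) < 2 * (r * (t * n ^ 2)) := by
    have : r * (t * n ^ 2 + n) = r * (t * n ^ 2) + r * n := by ring
    omega
  exact ⟨h1, h12, h23, h34, h45, hrn2, h2v1⟩

private lemma stmt16_nodecomp (r n t a b c d e g : ℕ) (hr : 1 ≤ r) (hn : r + 2 ≤ n)
    (ht : n + 1 ≤ t)
    (hg : g = r * (t * n ^ 2) ∨ g = r * (t * n ^ 2 + n) ∨ g = r * (t ^ 2 * n + 1) ∨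
      g = r * (t ^ 2 * n + n + 1) ∨ g = t ^ 2 * n ^ 2 - t ^ 2 * n - 1)
    (hsum : a * (r * (t * n ^ 2)) + b * (r * (t * n ^ 2 + n)) + c * (r * (t ^ 2 * n + 1)) +
      d * (r * (t ^ 2 * n + n + 1)) + e * (t ^ 2 * n ^ 2 - t ^ 2 * n - 1) = g)
    (hlen : 2 ≤ a + b + c + d + e) : False := by
  obtain ⟨h1, h12, h23, h34, h45, hrn2, h2v1⟩ := stmt16_lt r n t hr hn ht
  have hn3 : 3 ≤ n := by omega
  have ht4 : 4 ≤ t := by omega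
  -- lower bounds on each term
  have L1 : a * (r * (t * n ^ 2)) ≥ a * (r * (t * n ^ 2)) := le_refl _
  have L2 : b * (r * (t * n ^ 2)) ≤ b * (r * (t * n ^ 2 + n)) :=
    Nat.mul_le_mul_left b (by omega)
  have L3 : c * (r * (t * n ^ 2)) ≤ c * (r * (t ^ 2 * n + 1)) :=
    Nat.mul_le_mul_left c (by omega)
  have L4 : d * (r * (t * n ^ 2)) ≤ d * (r * (t ^ 2 * n + n + 1)) :=
    Nat.mul_le_mul_left d (by omega)
  have L5 : e * (r * (t * n ^ 2)) ≤ e * (t ^ 2 * n ^ 2 - t ^ 2 * n - 1) :=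
    Nat.mul_le_mul_left e (by omega)
  have Ltot : (a + b + c + d + e) * (r * (t * n ^ 2)) ≤ g := by
    calc (a + b + c + d + e) * (r * (t * n ^ 2))
        = a * (r * (t * n ^ 2)) + b * (r * (t * n ^ 2)) + c * (r * (t * n ^ 2)) +
          d * (r * (t * n ^ 2)) + e * (r * (t * n ^ 2)) := by ring
      _ ≤ a * (r * (t * n ^ 2)) + b * (r * (t * n ^ 2 + n)) + c * (r * (t ^ 2 * n + 1)) +
          d * (r * (t ^ 2 * n + n + 1)) + e * (t ^ 2 * n ^ 2 - t ^ 2 * n - 1) := by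
            omega
      _ = g := hsum
  have Ltot2 : 2 * (r * (t * n ^ 2)) ≤ g :=
    le_trans (Nat.mul_le_mul_right _ hlen) Ltot
  rcases hg with rfl | rfl | rfl | rfl | rfl
  · omega
  · omega
  · -- g = v3
    have he0 : e = 0 := by
      rcases Nat.eq_zero_or_pos e with h | h
      · exact h
      · exfalso
        have := Nat.le_mul_of_pos_left (t ^ 2 * n ^ 2 - t ^ 2 * n - 1) h
        omega
    have hd0 : d = 0 := by
      rcases Nat.eq_zero_or_pos d with h | h
      · exact h
      · exfalso
        have := Nat.le_mul_of_pos_left (r * (t ^ 2 * n + n + 1)) h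
        omega
    have hc1 : c ≤ 1 := by
      by_contra hcc
      push_neg at hcc
      have : 2 * (r * (t ^ 2 * n + 1)) ≤ c * (r * (t ^ 2 * n + 1)) :=
        Nat.mul_le_mul_right _ (by omega)
      omega
    rcases (by omega : c = 0 ∨ c = 1) with hc | hc
    · -- a*v1 + b*v2 = v3 : n ∣ r, contradiction
      subst hc he0 hd0
      have hZ : (a:ℤ) * ((r:ℤ) * ((t:ℤ) * (n:ℤ) ^ 2)) + (b:ℤ) * ((r:ℤ) * ((t:ℤ) * (n:ℤ) ^ 2 + n))
          = (r:ℤ) * ((t:ℤ) ^ 2 * n + 1) := by exact_mod_cast (by omega : a * (r * (t * n ^ 2)) +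
            b * (r * (t * n ^ 2 + n)) = r * (t ^ 2 * n + 1))
      have hdvd : (n:ℤ) ∣ (r:ℤ) :=
        ⟨(a:ℤ) * r * t * n + (b:ℤ) * r * t * n + (b:ℤ) * r - (r:ℤ) * (t:ℤ) ^ 2, by
          linear_combination (-1 : ℤ) * hZ⟩
      have := Int.le_of_dvd (by exact_mod_cast hr : (0:ℤ) < (r:ℤ)) hdvd
      have hnr : (n:ℤ) ≤ (r:ℤ) := this
      have : n ≤ r := by exact_mod_cast hnr
      omega
    · subst hc he0 hd0
      have hab : a * (r * (t * n ^ 2)) + b * (r * (t * n ^ 2 + n)) = 0 := by omega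
      have ha0 : a = 0 := by
        rcases Nat.mul_eq_zero.mp (by omega : a * (r * (t * n ^ 2)) = 0) with h | h
        · exact h
        · omega
      have hb0 : b = 0 := by
        rcases Nat.mul_eq_zero.mp (by omega : b * (r * (t * n ^ 2 + n)) = 0) with h | h
        · exact h
        · omega
      omega
  · -- g = v4
    have he0 : e = 0 := by
      rcases Nat.eq_zero_or_pos e with h | h
      · exact h
      · exfalso
        have := Nat.le_mul_of_pos_left (t ^ 2 * n ^ 2 - t ^ 2 * n - 1) h
        omega
    have hd1 : d ≤ 1 := by
      by_contra hcc
      push_neg at hcc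
      have : 2 * (r * (t ^ 2 * n + n + 1)) ≤ d * (r * (t ^ 2 * n + n + 1)) :=
        Nat.mul_le_mul_right _ (by omega)
      omega
    rcases (by omega : d = 0 ∨ d = 1) with hd | hd
    · -- d = 0
      have hv43 : r * (t ^ 2 * n + n + 1) = r * (t ^ 2 * n + 1) + r * n := by ring
      have hc1 : c ≤ 1 := by
        by_contra hcc
        push_neg at hcc
        have : 2 * (r * (t ^ 2 * n + 1)) ≤ c * (r * (t ^ 2 * n + 1)) :=
          Nat.mul_le_mul_right _ (by omega)
        omega
      rcases (by omega : c = 0 ∨ c = 1) with hc | hc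
      · -- a*v1 + b*v2 = v4 : n ∣ r
        subst hc hd he0
        have hZ : (a:ℤ) * ((r:ℤ) * ((t:ℤ) * (n:ℤ) ^ 2)) +
            (b:ℤ) * ((r:ℤ) * ((t:ℤ) * (n:ℤ) ^ 2 + n)) =
            (r:ℤ) * ((t:ℤ) ^ 2 * n + n + 1) := by exact_mod_cast (by omega : a * (r * (t * n ^ 2)) +
              b * (r * (t * n ^ 2 + n)) = r * (t ^ 2 * n + n + 1))
        have hdvd : (n:ℤ) ∣ (r:ℤ) :=
          ⟨(a:ℤ) * r * t * n + (b:ℤ) * r * t * n + (b:ℤ) * r - (r:ℤ) * (t:ℤ) ^ 2 - r, by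
            linear_combination (-1 : ℤ) * hZ⟩
        have := Int.le_of_dvd (by exact_mod_cast hr : (0:ℤ) < (r:ℤ)) hdvd
        have hnr : n ≤ r := by exact_mod_cast this
        omega
      · -- a*v1 + b*v2 = r*n, impossible since v1 > r*n
        subst hc hd he0
        have hab : a * (r * (t * n ^ 2)) + b * (r * (t * n ^ 2 + n)) = r * n := by omega
        have ha0 : a = 0 := by
          rcases Nat.eq_zero_or_pos a with h | h
          · exact h
          · exfalso
            have := Nat.le_mul_of_pos_left (r * (t * n ^ 2)) h
            omega
        have hb0 : b = 0 := by
          rcases Nat.eq_zero_or_pos b with h | h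
          · exact h
          · exfalso
            have := Nat.le_mul_of_pos_left (r * (t * n ^ 2 + n)) h
            omega
        have : (0:ℕ) < r * n := Nat.mul_pos (by omega) (by omega)
        omega
    · -- d = 1 : rest must vanish, length 1
      subst hd he0
      have ha0 : a = 0 := by
        rcases Nat.mul_eq_zero.mp (by omega : a * (r * (t * n ^ 2)) = 0) with h | h
        · exact h
        · omega
      have hb0 : b = 0 := by
        rcases Nat.mul_eq_zero.mp (by omega : b * (r * (t * n ^ 2 + n)) = 0) with h | h
        · exact h
        · omega
      have hc0 : c = 0 := by
        rcases Nat.mul_eq_zero.mp (by omega : c * (r * (t ^ 2 * n + 1)) = 0) with h | h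
        · exact h
        · omega
      omega
  · -- g = v5
    obtain ⟨F, hF⟩ : ∃ F, t ^ 2 * n ^ 2 - t ^ 2 * n - 1 = F := ⟨_, rfl⟩
    rw [hF] at hsum h45
    have hsub : t ^ 2 * n + 1 ≤ t ^ 2 * n ^ 2 := by
      nlinarith [mul_le_mul_of_nonneg_left hn3 (Nat.zero_le (t ^ 2 * n))]
    have hFe : F + (t ^ 2 * n + 1) = t ^ 2 * n ^ 2 := by omega
    have hFpos : 0 < F := by omega
    have he1 : e ≤ 1 := by
      by_contra hcc
      push_neg at hcc
      have : 2 * F ≤ e * F := Nat.mul_le_mul_right _ (by omega)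
      omega
    rcases (by omega : e = 0 ∨ e = 1) with he | he
    · -- a v1 + b v2 + c v3 + d v4 = F
      subst he
      have hZ : (a:ℤ) * ((r:ℤ) * ((t:ℤ) * (n:ℤ) ^ 2)) +
          (b:ℤ) * ((r:ℤ) * ((t:ℤ) * (n:ℤ) ^ 2 + n)) +
          (c:ℤ) * ((r:ℤ) * ((t:ℤ) ^ 2 * n + 1)) +
          (d:ℤ) * ((r:ℤ) * ((t:ℤ) ^ 2 * n + n + 1)) = (F:ℤ) := by
        exact_mod_cast (by omega : a * (r * (t * n ^ 2)) + b * (r * (t * n ^ 2 + n)) +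
          c * (r * (t ^ 2 * n + 1)) + d * (r * (t ^ 2 * n + n + 1)) = F)
      have hFz : (F:ℤ) + ((t:ℤ) ^ 2 * n + 1) = (t:ℤ) ^ 2 * (n:ℤ) ^ 2 := by exact_mod_cast hFe
      -- bound: r*(c+d) + 2 ≤ n
      have hbound : (r:ℤ) * ((c:ℤ) + d) + 2 ≤ n := by
        by_contra hcon
        push_neg at hcon
        have m1 : ((n:ℤ) - 1) * ((t:ℤ) ^ 2 * n + 1) ≤
            ((r:ℤ) * ((c:ℤ) + d)) * ((t:ℤ) ^ 2 * n + 1) :=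
          mul_le_mul_of_nonneg_right (by omega) (by positivity)
        have q1 : (0:ℤ) ≤ (a:ℤ) * ((r:ℤ) * ((t:ℤ) * (n:ℤ) ^ 2)) := by positivity
        have q2 : (0:ℤ) ≤ (b:ℤ) * ((r:ℤ) * ((t:ℤ) * (n:ℤ) ^ 2 + n)) := by positivity
        have q3 : (0:ℤ) ≤ (d:ℤ) * ((r:ℤ) * (n:ℤ)) := by positivity
        have hNz : (3:ℤ) ≤ (n:ℤ) := by exact_mod_cast hn3
        linarith [hZ, m1, q1, q2, q3, hFz, hNz]
      have hdvd : (n:ℤ) ∣ ((r:ℤ) * ((c:ℤ) + d) + 1) :=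
        ⟨(t:ℤ) ^ 2 * n - (t:ℤ) ^ 2 - ((a:ℤ) * r * t * n + (b:ℤ) * r * t * n + (b:ℤ) * r +
          (c:ℤ) * r * (t:ℤ) ^ 2 + (d:ℤ) * r * (t:ℤ) ^ 2 + (d:ℤ) * r), by
          linear_combination hZ + hFz⟩
      have hpos : (0:ℤ) < (r:ℤ) * ((c:ℤ) + d) + 1 := by positivity
      have := Int.le_of_dvd hpos hdvd
      have hNz : (3:ℤ) ≤ (n:ℤ) := by exact_mod_cast hn3
      linarith [hbound, this]
    · subst he
      have ha0 : a = 0 := by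
        rcases Nat.mul_eq_zero.mp (by omega : a * (r * (t * n ^ 2)) = 0) with h | h
        · exact h
        · omega
      have hb0 : b = 0 := by
        rcases Nat.mul_eq_zero.mp (by omega : b * (r * (t * n ^ 2 + n)) = 0) with h | h
        · exact h
        · omega
      have hc0 : c = 0 := by
        rcases Nat.mul_eq_zero.mp (by omega : c * (r * (t ^ 2 * n + 1)) = 0) with h | h
        · exact h
        · omega
      have hd0 : d = 0 := by
        rcases Nat.mul_eq_zero.mp (by omega : d * (r * (t ^ 2 * n + n + 1)) = 0) with h | h
        · exact h
        · omega
      omega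


private lemma stmt16_key' (r n t a b c d e : ℕ) (hr : 1 ≤ r) (hn : r + 2 ≤ n) (ht : n + 1 ≤ t)
    (h : a * (r * (t * n ^ 2)) + b * (r * (t * n ^ 2 + n)) + c * (r * (t ^ 2 * n + 1)) +
          d * (r * (t ^ 2 * n + n + 1)) + e * (t ^ 2 * n ^ 2 - t ^ 2 * n - 1) =
        r * (t ^ 2 * n ^ 2 + n)) :
    (a, b, c, d, e) = (0, 0, n, 0, 0) ∨ (a, b, c, d, e) = (t - 1, 1, 0, 0, 0) ∨
      (a, b, c, d, e) = (0, 0, 0, 1, r) := by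
  have hn3 : 3 ≤ n := by omega
  have ht4 : 4 ≤ t := by omega
  have htpos : 0 < t := by omega
  have hnpos : 0 < n := by omega
  have hsub : t ^ 2 * n + 1 ≤ t ^ 2 * n ^ 2 := by
    nlinarith [mul_le_mul_of_nonneg_left hn3 (Nat.zero_le (t ^ 2 * n))]
  obtain ⟨F, hF⟩ : ∃ F, t ^ 2 * n ^ 2 - t ^ 2 * n - 1 = F := ⟨_, rfl⟩
  rw [hF] at h
  have hFe : F + (t ^ 2 * n + 1) = t ^ 2 * n ^ 2 := by omega
  have ht2 : r + 2 ≤ t ^ 2 := by nlinarith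
  have haux : r * n + r + 2 ≤ t ^ 2 * n := by
    nlinarith [mul_le_mul_of_nonneg_right ht2 (Nat.zero_le n)]
  -- bound e ≤ r
  have her : e ≤ r := by
    by_contra hc
    push_neg at hc
    have k1 : (r + 2) * (t ^ 2 * n) ≤ n * (t ^ 2 * n) := mul_le_mul_of_nonneg_right hn (Nat.zero_le _)
    have k3 : (r + 1) * F ≤ e * F := Nat.mul_le_mul_right F hc
    have k4 : r * (t ^ 2 * n ^ 2) = r * F + r * (t ^ 2 * n) + r := by rw [← hFe]; ring
    linarith [k1, k3, k4, h, hFe, haux, Nat.zero_le (a * (r * (t * n ^ 2))),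
      Nat.zero_le (b * (r * (t * n ^ 2 + n))),
      Nat.zero_le (c * (r * (t ^ 2 * n + 1))), Nat.zero_le (d * (r * (t ^ 2 * n + n + 1)))]
  -- integer casts of basic positivity
  have hRz : (0:ℤ) < (r:ℤ) := by exact_mod_cast hr
  have hNz : (3:ℤ) ≤ (n:ℤ) := by exact_mod_cast hn3
  have hTz : (n:ℤ) + 1 ≤ (t:ℤ) := by exact_mod_cast ht
  have hRN : (r:ℤ) + 2 ≤ (n:ℤ) := by exact_mod_cast hn
  have hA0 : (0:ℤ) ≤ (a:ℤ) := Int.natCast_nonneg a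
  have hB0 : (0:ℤ) ≤ (b:ℤ) := Int.natCast_nonneg b
  have hC0 : (0:ℤ) ≤ (c:ℤ) := Int.natCast_nonneg c
  have hD0 : (0:ℤ) ≤ (d:ℤ) := Int.natCast_nonneg d
  have hE0 : (0:ℤ) ≤ (e:ℤ) := Int.natCast_nonneg e
  have hN0 : (n:ℤ) ≠ 0 := by omega
  have hz : (a:ℤ) * ((r:ℤ) * ((t:ℤ) * (n:ℤ) ^ 2)) + (b:ℤ) * ((r:ℤ) * ((t:ℤ) * (n:ℤ) ^ 2 + n)) +
      (c:ℤ) * ((r:ℤ) * ((t:ℤ) ^ 2 * n + 1)) + (d:ℤ) * ((r:ℤ) * ((t:ℤ) ^ 2 * n + n + 1)) +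
      (e:ℤ) * (F:ℤ) = (r:ℤ) * ((t:ℤ) ^ 2 * (n:ℤ) ^ 2 + n) := by exact_mod_cast h
  have hFz : (F:ℤ) + ((t:ℤ) ^ 2 * n + 1) = (t:ℤ) ^ 2 * (n:ℤ) ^ 2 := by exact_mod_cast hFe
  rcases (show e = 0 ∨ e = r ∨ (1 ≤ e ∧ e + 1 ≤ r) by omega) with he | he | ⟨he1, he2⟩
  · -- case e = 0
    have hez : (e:ℤ) = 0 := by exact_mod_cast he
    have g0 : (a:ℤ) * ((t:ℤ) * (n:ℤ) ^ 2) + (b:ℤ) * ((t:ℤ) * (n:ℤ) ^ 2 + n) +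
        (c:ℤ) * ((t:ℤ) ^ 2 * n + 1) + (d:ℤ) * ((t:ℤ) ^ 2 * n + n + 1) =
        (t:ℤ) ^ 2 * (n:ℤ) ^ 2 + n := by
      have h' : (r:ℤ) * ((a:ℤ) * ((t:ℤ) * (n:ℤ) ^ 2) + (b:ℤ) * ((t:ℤ) * (n:ℤ) ^ 2 + n) +
          (c:ℤ) * ((t:ℤ) ^ 2 * n + 1) + (d:ℤ) * ((t:ℤ) ^ 2 * n + n + 1)) =
          (r:ℤ) * ((t:ℤ) ^ 2 * (n:ℤ) ^ 2 + n) := by linear_combination hz - (F:ℤ) * hez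
      exact mul_left_cancel₀ (by positivity) h'
    have hdvd : (n:ℤ) ∣ ((c:ℤ) + d) :=
      ⟨(t:ℤ) ^ 2 * n + 1 - a * t * n - b * t * n - b - c * (t:ℤ) ^ 2 - d * (t:ℤ) ^ 2 - d, by
        linear_combination g0⟩
    have hbd : (c:ℤ) + d ≤ n := by
      by_contra hcon
      push_neg at hcon
      have m1 : ((n:ℤ) + 1) * ((t:ℤ) ^ 2 * n + 1) ≤ ((c:ℤ) + d) * ((t:ℤ) ^ 2 * n + 1) :=
        mul_le_mul_of_nonneg_right (by omega) (by positivity)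
      nlinarith [mul_nonneg hA0 (show (0:ℤ) ≤ (t:ℤ) * (n:ℤ) ^ 2 by positivity),
        mul_nonneg hB0 (show (0:ℤ) ≤ (t:ℤ) * (n:ℤ) ^ 2 + n by positivity),
        mul_nonneg hD0 (show (0:ℤ) ≤ (n:ℤ) by positivity)]
    rcases eq_or_lt_of_le (show (0:ℤ) ≤ (c:ℤ) + d by positivity) with h0 | hpos
    · -- c = d = 0 : second solution
      have hcd0 : c + d = 0 := by exact_mod_cast h0.symm
      have hc0 : c = 0 := by omega
      have hd0 : d = 0 := by omega
      have hcz : (c:ℤ) = 0 := by exact_mod_cast hc0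
      have hdz : (d:ℤ) = 0 := by exact_mod_cast hd0
      have g2 : (a:ℤ) * ((t:ℤ) * n) + (b:ℤ) * ((t:ℤ) * n) + b = (t:ℤ) ^ 2 * n + 1 := by
        have h' : (n:ℤ) * ((a:ℤ) * ((t:ℤ) * n) + (b:ℤ) * ((t:ℤ) * n) + b) =
            (n:ℤ) * ((t:ℤ) ^ 2 * n + 1) := by
          linear_combination g0 - ((t:ℤ) ^ 2 * n + 1) * hcz - ((t:ℤ) ^ 2 * n + n + 1) * hdz
        exact mul_left_cancel₀ hN0 h'
      rcases lt_trichotomy ((a:ℤ) + b) (t:ℤ) with hlt | heq | hgt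
      · exfalso
        have m1 : ((a:ℤ) + b) * ((t:ℤ) * n) ≤ ((t:ℤ) - 1) * ((t:ℤ) * n) :=
          mul_le_mul_of_nonneg_right (by omega) (by positivity)
        have m2 : (t:ℤ) * 3 ≤ (t:ℤ) * n := by nlinarith
        linarith [g2, m1, m2]
      · have hB : (b:ℤ) = 1 := by linear_combination g2 - ((t:ℤ) * n) * heq
        have hA : (a:ℤ) + 1 = t := by linear_combination heq - hB
        have hb1 : b = 1 := by exact_mod_cast hB
        have ha1 : a + 1 = t := by exact_mod_cast hA
        right; left
        simp only [Prod.mk.injEq]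
        omega
      · exfalso
        have m1 : ((t:ℤ) + 1) * ((t:ℤ) * n) ≤ ((a:ℤ) + b) * ((t:ℤ) * n) :=
          mul_le_mul_of_nonneg_right (by omega) (by positivity)
        have m2 : (3:ℤ) ≤ (t:ℤ) * n := by nlinarith
        linarith [g2, m1, m2]
    · -- c + d = n : first solution
      have hcdn : (c:ℤ) + d = n := le_antisymm hbd (Int.le_of_dvd hpos hdvd)
      have g1 : (a:ℤ) * ((t:ℤ) * (n:ℤ) ^ 2) + (b:ℤ) * ((t:ℤ) * (n:ℤ) ^ 2) + (b:ℤ) * n +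
          (d:ℤ) * n = 0 := by linear_combination g0 - ((t:ℤ) ^ 2 * n + 1) * hcdn
      have p1 : (0:ℤ) ≤ (a:ℤ) * ((t:ℤ) * (n:ℤ) ^ 2) := by positivity
      have p2 : (0:ℤ) ≤ (b:ℤ) * ((t:ℤ) * (n:ℤ) ^ 2) := by positivity
      have p3 : (0:ℤ) ≤ (b:ℤ) * n := by positivity
      have p4 : (0:ℤ) ≤ (d:ℤ) * n := by positivity
      have hbn : (b:ℤ) * n = 0 := by linarith
      have hdn : (d:ℤ) * n = 0 := by linarith
      have han : (a:ℤ) * ((t:ℤ) * (n:ℤ) ^ 2) = 0 := by linarith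
      have ha0 : (a:ℤ) = 0 := by
        rcases mul_eq_zero.mp han with h' | h'
        · exact h'
        · exfalso
          have : (0:ℤ) < (t:ℤ) * (n:ℤ) ^ 2 := by positivity
          linarith
      have hb0 : (b:ℤ) = 0 := by
        rcases mul_eq_zero.mp hbn with h' | h'
        · exact h'
        · exact absurd h' hN0
      have hd0 : (d:ℤ) = 0 := by
        rcases mul_eq_zero.mp hdn with h' | h'
        · exact h'
        · exact absurd h' hN0
      have hcn : (c:ℤ) = n := by omega
      left
      simp only [Prod.mk.injEq]
      refine ⟨by exact_mod_cast ha0, by exact_mod_cast hb0, by exact_mod_cast hcn,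
        by exact_mod_cast hd0, he⟩
  · -- case e = r : third solution
    have hez : (e:ℤ) = r := by exact_mod_cast he
    have g3 : (a:ℤ) * ((t:ℤ) * (n:ℤ) ^ 2) + (b:ℤ) * ((t:ℤ) * (n:ℤ) ^ 2 + n) +
        (c:ℤ) * ((t:ℤ) ^ 2 * n + 1) + (d:ℤ) * ((t:ℤ) ^ 2 * n + n + 1) =
        (t:ℤ) ^ 2 * n + n + 1 := by
      have h' : (r:ℤ) * ((a:ℤ) * ((t:ℤ) * (n:ℤ) ^ 2) + (b:ℤ) * ((t:ℤ) * (n:ℤ) ^ 2 + n) +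
          (c:ℤ) * ((t:ℤ) ^ 2 * n + 1) + (d:ℤ) * ((t:ℤ) ^ 2 * n + n + 1)) =
          (r:ℤ) * ((t:ℤ) ^ 2 * n + n + 1) := by
        linear_combination hz - (F:ℤ) * hez - (r:ℤ) * hFz
      exact mul_left_cancel₀ (by positivity) h'
    have hd1 : (d:ℤ) ≤ 1 := by
      by_contra hcon
      push_neg at hcon
      have m1 : (2:ℤ) * ((t:ℤ) ^ 2 * n + n + 1) ≤ (d:ℤ) * ((t:ℤ) ^ 2 * n + n + 1) :=
        mul_le_mul_of_nonneg_right (by omega) (by positivity)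
      linarith [g3, m1, mul_nonneg hA0 (show (0:ℤ) ≤ (t:ℤ) * (n:ℤ) ^ 2 by positivity),
        mul_nonneg hB0 (show (0:ℤ) ≤ (t:ℤ) * (n:ℤ) ^ 2 + n by positivity),
        mul_nonneg hC0 (show (0:ℤ) ≤ (t:ℤ) ^ 2 * n + 1 by positivity),
        mul_pos (show (0:ℤ) < (t:ℤ)^2 by positivity) (show (0:ℤ) < (n:ℤ) by linarith)]
    have : (d:ℤ) = 0 ∨ (d:ℤ) = 1 := by omega
    rcases this with hdz | hdz
    · -- d = 0 : contradiction
      exfalso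
      have ht4z : (4:ℤ) ≤ (t:ℤ) := by exact_mod_cast ht4
      have htsq : (1:ℤ) ≤ (t:ℤ) ^ 2 := by nlinarith [ht4z]
      have g3d : (a:ℤ) * ((t:ℤ) * (n:ℤ) ^ 2) + (b:ℤ) * ((t:ℤ) * (n:ℤ) ^ 2 + n) +
          (c:ℤ) * ((t:ℤ) ^ 2 * n + 1) = (t:ℤ) ^ 2 * n + n + 1 := by
        linear_combination g3 - ((t:ℤ) ^ 2 * n + n + 1) * hdz
      have hc1 : (c:ℤ) ≤ 1 := by
        by_contra hcon
        push_neg at hcon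
        have m1 : (2:ℤ) * ((t:ℤ) ^ 2 * n + 1) ≤ (c:ℤ) * ((t:ℤ) ^ 2 * n + 1) :=
          mul_le_mul_of_nonneg_right (by omega) (by positivity)
        linarith [g3d, m1, mul_nonneg hA0 (show (0:ℤ) ≤ (t:ℤ) * (n:ℤ) ^ 2 by positivity),
          mul_nonneg hB0 (show (0:ℤ) ≤ (t:ℤ) * (n:ℤ) ^ 2 + n by positivity),
          mul_le_mul_of_nonneg_right htsq (show (0:ℤ) ≤ (n:ℤ) by linarith)]
      have : (c:ℤ) = 0 ∨ (c:ℤ) = 1 := by omega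
      rcases this with hcz | hcz
      · -- c = 0, d = 0 : n divides 1
        have hdvd1 : (n:ℤ) ∣ 1 :=
          ⟨(a:ℤ) * t * n + (b:ℤ) * t * n + b - (t:ℤ) ^ 2 - 1, by
            linear_combination (-1 : ℤ) * g3 + ((t:ℤ) ^ 2 * n + 1) * hcz + ((t:ℤ) ^ 2 * n + n + 1) * hdz⟩
        have := Int.le_of_dvd one_pos hdvd1
        omega
      · -- c = 1, d = 0 : a*(tn²) + b*(tn²+n) = n, impossible
        have g4 : (a:ℤ) * ((t:ℤ) * (n:ℤ) ^ 2) + (b:ℤ) * ((t:ℤ) * (n:ℤ) ^ 2 + n) = n := by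
          linear_combination g3d - ((t:ℤ) ^ 2 * n + 1) * hcz
        have hab0 : (a:ℤ) = 0 ∧ (b:ℤ) = 0 := by
          constructor
          · by_contra hcon
            have ha1 : (1:ℤ) ≤ a := by omega
            linarith [g4, mul_le_mul_of_nonneg_right ha1 (show (0:ℤ) ≤ (t:ℤ) * (n:ℤ) ^ 2 by positivity),
              mul_nonneg hB0 (show (0:ℤ) ≤ (t:ℤ) * (n:ℤ) ^ 2 + n by positivity),
              mul_le_mul_of_nonneg_left hNz (show (0:ℤ) ≤ (t:ℤ) * n by positivity),
              mul_le_mul_of_nonneg_left (show (1:ℤ) ≤ (t:ℤ) by linarith) (show (0:ℤ) ≤ (n:ℤ) by linarith)]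
          · by_contra hcon
            have hb1 : (1:ℤ) ≤ b := by omega
            linarith [g4, mul_le_mul_of_nonneg_right hb1 (show (0:ℤ) ≤ (t:ℤ) * (n:ℤ) ^ 2 + n by positivity),
              mul_nonneg hA0 (show (0:ℤ) ≤ (t:ℤ) * (n:ℤ) ^ 2 by positivity),
              mul_le_mul_of_nonneg_left hNz (show (0:ℤ) ≤ (t:ℤ) * n by positivity),
              mul_le_mul_of_nonneg_left (show (1:ℤ) ≤ (t:ℤ) by linarith) (show (0:ℤ) ≤ (n:ℤ) by linarith)]
        have hnz0 : (n:ℤ) = 0 := by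
          linear_combination ((t:ℤ) * (n:ℤ) ^ 2) * hab0.1 + ((t:ℤ) * (n:ℤ) ^ 2 + n) * hab0.2 - g4
        linarith
    · -- d = 1 : a = b = c = 0
      have g5 : (a:ℤ) * ((t:ℤ) * (n:ℤ) ^ 2) + (b:ℤ) * ((t:ℤ) * (n:ℤ) ^ 2 + n) +
          (c:ℤ) * ((t:ℤ) ^ 2 * n + 1) = 0 := by
        linear_combination g3 - ((t:ℤ) ^ 2 * n + n + 1) * hdz
      have p1 : (0:ℤ) ≤ (a:ℤ) * ((t:ℤ) * (n:ℤ) ^ 2) := by positivity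
      have p2 : (0:ℤ) ≤ (b:ℤ) * ((t:ℤ) * (n:ℤ) ^ 2 + n) := by positivity
      have p3 : (0:ℤ) ≤ (c:ℤ) * ((t:ℤ) ^ 2 * n + 1) := by positivity
      have ha0 : (a:ℤ) = 0 := by
        have : (a:ℤ) * ((t:ℤ) * (n:ℤ) ^ 2) = 0 := by linarith
        rcases mul_eq_zero.mp this with h' | h'
        · exact h'
        · exfalso
          have : (0:ℤ) < (t:ℤ) * (n:ℤ) ^ 2 := by positivity
          linarith
      have hb0 : (b:ℤ) = 0 := by
        have : (b:ℤ) * ((t:ℤ) * (n:ℤ) ^ 2 + n) = 0 := by linarith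
        rcases mul_eq_zero.mp this with h' | h'
        · exact h'
        · exfalso
          have : (0:ℤ) < (t:ℤ) * (n:ℤ) ^ 2 + n := by positivity
          linarith
      have hc0 : (c:ℤ) = 0 := by
        have : (c:ℤ) * ((t:ℤ) ^ 2 * n + 1) = 0 := by linarith
        rcases mul_eq_zero.mp this with h' | h'
        · exact h'
        · exfalso
          have : (0:ℤ) < (t:ℤ) ^ 2 * n + 1 := by positivity
          linarith
      right; right
      simp only [Prod.mk.injEq]
      refine ⟨by exact_mod_cast ha0, by exact_mod_cast hb0, by exact_mod_cast hc0,
        by exact_mod_cast hdz, he⟩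
  · -- case 1 ≤ e ≤ r - 1 : contradiction
    exfalso
    obtain ⟨f, hf⟩ : ∃ f, r - e = f := ⟨_, rfl⟩
    have hef : e + f = r := by omega
    have hf1 : 1 ≤ f := by omega
    have hefz : (e:ℤ) + (f:ℤ) = r := by exact_mod_cast hef
    have hFz1 : (1:ℤ) ≤ (f:ℤ) := by exact_mod_cast hf1
    have hEz1 : (1:ℤ) ≤ (e:ℤ) := by exact_mod_cast he1
    have hEzr : (e:ℤ) + 1 ≤ r := by exact_mod_cast he2
    have hR0 : (0:ℤ) ≤ (r:ℤ) := by linarith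
    have hf0 : (0:ℤ) ≤ (f:ℤ) := by linarith
    have h2z : (r:ℤ) * ((a:ℤ) * ((t:ℤ) * (n:ℤ) ^ 2) + (b:ℤ) * ((t:ℤ) * (n:ℤ) ^ 2 + n) +
        (c:ℤ) * ((t:ℤ) ^ 2 * n + 1) + (d:ℤ) * ((t:ℤ) ^ 2 * n + n + 1)) =
        (f:ℤ) * (F:ℤ) + (r:ℤ) * ((t:ℤ) ^ 2 * n + n + 1) := by
      linear_combination hz - (F:ℤ) * hefz - (r:ℤ) * hFz
    have hdvd : (n:ℤ) ∣ ((r:ℤ) * ((c:ℤ) + d) + f - r) :=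
      ⟨(f:ℤ) * (t:ℤ) ^ 2 * n - r * a * t * n - r * b * t * n - r * b - r * c * (t:ℤ) ^ 2 -
        r * d * (t:ℤ) ^ 2 - r * d - f * (t:ℤ) ^ 2 + r * (t:ℤ) ^ 2 + r, by
        linear_combination h2z + (f:ℤ) * hFz⟩
    rcases Nat.eq_zero_or_pos (c + d) with hcd0 | hcdpos
    · -- c = d = 0 : n ∣ e, impossible
      have hcz : (c:ℤ) = 0 := by exact_mod_cast (by omega : c = 0)
      have hdz : (d:ℤ) = 0 := by exact_mod_cast (by omega : d = 0)
      have h1 : (r:ℤ) * ((c:ℤ) + d) + f - r = -(e:ℤ) := by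
        rw [hcz, hdz]; linarith
      rw [h1] at hdvd
      have hdvd2 : (n:ℤ) ∣ (e:ℤ) := (dvd_neg).mp hdvd
      have := Int.le_of_dvd (by linarith) hdvd2
      linarith
    · -- c + d ≥ 1
      have hcd1 : (1:ℤ) ≤ (c:ℤ) + d := by
        have : (1:ℕ) ≤ c + d := hcdpos
        exact_mod_cast this
      obtain ⟨k, hk⟩ := hdvd
      have hk1 : 1 ≤ k := by
        have hnk : 1 ≤ (n:ℤ) * k := by
          have := mul_le_mul_of_nonneg_left hcd1 hR0
          linarith [hk, this]
        by_contra hcon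
        push_neg at hcon
        have : (n:ℤ) * k ≤ (n:ℤ) * 0 := mul_le_mul_of_nonneg_left (by linarith) (by linarith)
        linarith
      have hFF : (f:ℤ) * (F:ℤ) = f * ((t:ℤ) ^ 2 * (n:ℤ) ^ 2) - f * ((t:ℤ) ^ 2 * n) - f := by
        linear_combination (f:ℤ) * hFz
      have hhaux : (r:ℤ) * n + r + 2 ≤ (t:ℤ) ^ 2 * n := by exact_mod_cast haux
      have hS3b : (r:ℤ) * ((c:ℤ) + d) ≤ (f:ℤ) * ((n:ℤ) - 1) + r := by
        by_contra hcon
        push_neg at hcon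
        have m1 : ((f:ℤ) * ((n:ℤ) - 1) + r + 1) * ((t:ℤ) ^ 2 * n + 1) ≤
            ((r:ℤ) * ((c:ℤ) + d)) * ((t:ℤ) ^ 2 * n + 1) :=
          mul_le_mul_of_nonneg_right (by omega) (by positivity)
        have q1 : (0:ℤ) ≤ (r:ℤ) * (a:ℤ) * ((t:ℤ) * (n:ℤ) ^ 2) := by positivity
        have q2 : (0:ℤ) ≤ (r:ℤ) * (b:ℤ) * ((t:ℤ) * (n:ℤ) ^ 2 + n) := by positivity
        have q3 : (0:ℤ) ≤ (r:ℤ) * (d:ℤ) * (n:ℤ) := by positivity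
        have q4 : (0:ℤ) ≤ (f:ℤ) * (n:ℤ) := by positivity
        linarith [h2z, m1, hFF, q1, q2, q3, q4, hhaux]
      have hkf : k ≤ (f:ℤ) := by
        have hle : (n:ℤ) * k ≤ (n:ℤ) * (f:ℤ) := by linarith [hk, hS3b]
        exact le_of_mul_le_mul_left hle (by linarith)
      have hDn : (n:ℤ) * ((r:ℤ) * ((t:ℤ) * n) * ((a:ℤ) + b) + r * b + k + r * d) =
          (n:ℤ) * ((t:ℤ) ^ 2 * n * ((f:ℤ) - k) + r) := by
        linear_combination h2z + (f:ℤ) * hFz - (1 + (n:ℤ) * (t:ℤ) ^ 2) * hk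
      have hD := mul_left_cancel₀ hN0 hDn
      have hm : ((t:ℤ) * n) * ((t:ℤ) * ((f:ℤ) - k) - (r:ℤ) * ((a:ℤ) + b)) =
          (r:ℤ) * b + k + r * d - r := by linear_combination (-1 : ℤ) * hD
      have q1 : (0:ℤ) ≤ (r:ℤ) * (b:ℤ) := by positivity
      have q2 : (0:ℤ) ≤ (r:ℤ) * (d:ℤ) := by positivity
      have q3 : (0:ℤ) ≤ (r:ℤ) * (a:ℤ) := by positivity
      have q4 : (0:ℤ) ≤ (r:ℤ) * (c:ℤ) := by positivity
      have hnt : (n:ℤ) * 1 ≤ (n:ℤ) * t := mul_le_mul_of_nonneg_left (by linarith) (by linarith)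
      have hM0 : 0 ≤ (t:ℤ) * ((f:ℤ) - k) - (r:ℤ) * ((a:ℤ) + b) := by
        by_contra hcon
        push_neg at hcon
        have hM1 : (t:ℤ) * ((f:ℤ) - k) - (r:ℤ) * ((a:ℤ) + b) ≤ -1 := by linarith
        have := mul_le_mul_of_nonneg_left hM1
          (show (0:ℤ) ≤ (t:ℤ) * n by positivity)
        linarith [hm, q1, q2, hk1, hnt]
      rcases eq_or_lt_of_le hM0 with hM | hM
      · -- M = 0
        have h6 : (r:ℤ) * b + k + r * d = r := by
          linear_combination (-1 : ℤ) * hm - ((t:ℤ) * n) * hM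
        rcases eq_or_lt_of_le (show (0:ℤ) ≤ (b:ℤ) + d by positivity) with hbd | hbd
        · have hb0 : (b:ℤ) = 0 := by omega
          have hd0 : (d:ℤ) = 0 := by omega
          rw [hb0, hd0] at h6
          -- k = r but k ≤ f ≤ r - 1
          linarith [hkf, hefz, hEz1, h6]
        · have : (r:ℤ) * 1 ≤ (r:ℤ) * ((b:ℤ) + d) := mul_le_mul_of_nonneg_left (by omega) hR0
          linarith [h6, hk1, this]
      · -- M ≥ 1
        have hM1 : (1:ℤ) ≤ (t:ℤ) * ((f:ℤ) - k) - (r:ℤ) * ((a:ℤ) + b) := hM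
        have hTNM : (t:ℤ) * n ≤ (t:ℤ) * n * ((t:ℤ) * ((f:ℤ) - k) - (r:ℤ) * ((a:ℤ) + b)) :=
          le_mul_of_one_le_right (by positivity) hM1
        have q5 : (r:ℤ) * b ≤ (t:ℤ) * ((f:ℤ) - k) - 1 := by linarith [q3, hM1]
        have q6 : (r:ℤ) * d ≤ (n:ℤ) * k + r - f := by linarith [hk, q4]
        have q7 : (t:ℤ) * n + 1 + (f:ℤ) - k - (n:ℤ) * k ≤ (t:ℤ) * ((f:ℤ) - k) := by
          linarith [hm, hTNM, q5, q6, hk1]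
        have q8 : (3:ℤ) ≤ (n:ℤ) + k - f := by linarith [hk1, hefz, hEz1, hRN]
        have q9 : ((n:ℤ) + 1) * ((n:ℤ) + k - f) ≤ (t:ℤ) * ((n:ℤ) + k - f) :=
          mul_le_mul_of_nonneg_right hTz (by linarith)
        have q10 : (f:ℤ) ≤ (n:ℤ) - 3 := by linarith [hefz, hEz1, hRN]
        have q11 : (n:ℤ) * 3 ≤ (n:ℤ) * ((n:ℤ) - f) :=
          mul_le_mul_of_nonneg_left (by linarith) (by linarith)
        linarith [q7, q9, q11]

private lemma stmt16_atom_iff (r n t : ℕ) (hr : 1 ≤ r) (hn : r + 2 ≤ n) (ht : n + 1 ≤ t)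
    (x : ℕ) :
    NumAtom (AddSubmonoid.closure
      ({r * (t * n ^ 2), r * (t * n ^ 2 + n), r * (t ^ 2 * n + 1),
        r * (t ^ 2 * n + n + 1), t ^ 2 * n ^ 2 - t ^ 2 * n - 1} : Set ℕ)) x ↔
    (x = r * (t * n ^ 2) ∨ x = r * (t * n ^ 2 + n) ∨ x = r * (t ^ 2 * n + 1) ∨
      x = r * (t ^ 2 * n + n + 1) ∨ x = t ^ 2 * n ^ 2 - t ^ 2 * n - 1) := by
  obtain ⟨h1, h12, h23, h34, h45, hrn2, h2v1⟩ := stmt16_lt r n t hr hn ht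
  have hposS : ∀ y : ℕ, (y = r * (t * n ^ 2) ∨ y = r * (t * n ^ 2 + n) ∨
      y = r * (t ^ 2 * n + 1) ∨ y = r * (t ^ 2 * n + n + 1) ∨
      y = t ^ 2 * n ^ 2 - t ^ 2 * n - 1) → 0 < y := by
    intro y hy
    rcases hy with rfl | rfl | rfl | rfl | rfl <;> omega
  have hmemT : ∀ y : ℕ, (y = r * (t * n ^ 2) ∨ y = r * (t * n ^ 2 + n) ∨
      y = r * (t ^ 2 * n + 1) ∨ y = r * (t ^ 2 * n + n + 1) ∨
      y = t ^ 2 * n ^ 2 - t ^ 2 * n - 1) →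
      y ∈ AddSubmonoid.closure ({r * (t * n ^ 2), r * (t * n ^ 2 + n), r * (t ^ 2 * n + 1),
        r * (t ^ 2 * n + n + 1), t ^ 2 * n ^ 2 - t ^ 2 * n - 1} : Set ℕ) := by
    intro y hy
    exact AddSubmonoid.subset_closure (by rcases hy with rfl | rfl | rfl | rfl | rfl <;> simp)
  constructor
  · rintro ⟨hxT, hx0, hnd⟩
    obtain ⟨l, hl, hsum⟩ := stmt16_rep r n t x hxT
    match l, hl, hsum with
    | [], hl, hsum => exact absurd hsum.symm hx0
    | [z], hl, hsum =>
      have := hl z (by simp)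
      simp only [List.sum_cons, List.sum_nil, add_zero] at hsum
      subst hsum
      exact this
    | z1 :: z2 :: ls, hl, hsum =>
      exfalso
      apply hnd
      refine ⟨z1, (z2 :: ls).sum, hmemT z1 (hl z1 (by simp)), ?_, ?_, ?_, ?_⟩
      · exact AddSubmonoid.list_sum_mem _ (fun y hy => hmemT y (hl y (List.mem_cons_of_mem _ hy)))
      · have := hposS z1 (hl z1 (by simp))
        omega
      · have hz2 : 0 < z2 := hposS z2 (hl z2 (by simp))
        have : z2 ≤ (z2 :: ls).sum := by
          simp only [List.sum_cons]
          omega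
        omega
      · simp only [List.sum_cons] at hsum ⊢
        omega
  · intro hx
    refine ⟨hmemT x hx, by have := hposS x hx; omega, ?_⟩
    rintro ⟨p, q, hp, hq, hp0, hq0, hpq⟩
    obtain ⟨lp, hlp, hlpsum⟩ := stmt16_rep r n t p hp
    obtain ⟨lq, hlq, hlqsum⟩ := stmt16_rep r n t q hq
    have hall : ∀ y ∈ lp ++ lq, (y = r * (t * n ^ 2) ∨ y = r * (t * n ^ 2 + n) ∨
        y = r * (t ^ 2 * n + 1) ∨ y = r * (t ^ 2 * n + n + 1) ∨
        y = t ^ 2 * n ^ 2 - t ^ 2 * n - 1) := by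
      intro y hy
      rcases List.mem_append.mp hy with h | h
      · exact hlp y h
      · exact hlq y h
    obtain ⟨hsum', hlen'⟩ := stmt16_count _ _ _ _ _ (by omega) (by omega) (by omega) (by omega)
      (by omega) (by omega) (by omega) (by omega) (by omega) (by omega) (lp ++ lq) hall
    have hlpne : lp ≠ [] := by
      rintro rfl
      simp at hlpsum
      exact hp0 hlpsum.symm
    have hlqne : lq ≠ [] := by
      rintro rfl
      simp at hlqsum
      exact hq0 hlqsum.symm
    have hlen2 : 2 ≤ (lp ++ lq).length := by
      rw [List.length_append]
      have := List.length_pos_iff.mpr hlpne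
      have := List.length_pos_iff.mpr hlqne
      omega
    have hsumx : (lp ++ lq).sum = x := by
      rw [List.sum_append, hlpsum, hlqsum, hpq]
    exact stmt16_nodecomp r n t ((lp ++ lq).count (r * (t * n ^ 2)))
      ((lp ++ lq).count (r * (t * n ^ 2 + n))) ((lp ++ lq).count (r * (t ^ 2 * n + 1)))
      ((lp ++ lq).count (r * (t ^ 2 * n + n + 1)))
      ((lp ++ lq).count (t ^ 2 * n ^ 2 - t ^ 2 * n - 1)) x hr hn ht hx
      (by rw [← hsum']; exact hsumx) (by omega)


theorem stmt_16 (r n t : ℕ) (hr : 1 ≤ r) (hn : r + 2 ≤ n) (ht : n + 1 ≤ t) :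
    (∀ α β γ δ ε : ℕ,
      α * (r * (t * n ^ 2)) + β * (r * (t * n ^ 2 + n)) + γ * (r * (t ^ 2 * n + 1)) +
          δ * (r * (t ^ 2 * n + n + 1)) + ε * (t ^ 2 * n ^ 2 - t ^ 2 * n - 1) =
        r * (t ^ 2 * n ^ 2 + n) →
      (α, β, γ, δ, ε) = (0, 0, n, 0, 0) ∨ (α, β, γ, δ, ε) = (t - 1, 1, 0, 0, 0) ∨
        (α, β, γ, δ, ε) = (0, 0, 0, 1, r)) ∧
    AS (AddSubmonoid.closure
        {r * (t * n ^ 2), r * (t * n ^ 2 + n), r * (t ^ 2 * n + 1),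
          r * (t ^ 2 * n + n + 1), t ^ 2 * n ^ 2 - t ^ 2 * n - 1})
        (r * (t ^ 2 * n ^ 2 + n)) = {r + 1, n, t} := by
  obtain ⟨h1, h12, h23, h34, h45, hrn2, h2v1⟩ := stmt16_lt r n t hr hn ht
  constructor
  · intro α β γ δ ε h
    exact stmt16_key' r n t α β γ δ ε hr hn ht h
  · ext m
    simp only [Set.mem_insert_iff, Set.mem_singleton_iff]
    constructor
    · rintro ⟨s, hs, hcard, hsum⟩
      have hmem : ∀ y ∈ s.toList, (y = r * (t * n ^ 2) ∨ y = r * (t * n ^ 2 + n) ∨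
          y = r * (t ^ 2 * n + 1) ∨ y = r * (t ^ 2 * n + n + 1) ∨
          y = t ^ 2 * n ^ 2 - t ^ 2 * n - 1) := by
        intro y hy
        exact (stmt16_atom_iff r n t hr hn ht y).mp (hs y (by rwa [Multiset.mem_toList] at hy))
      obtain ⟨hsum', hlen'⟩ := stmt16_count _ _ _ _ _ (by omega) (by omega) (by omega) (by omega)
        (by omega) (by omega) (by omega) (by omega) (by omega) (by omega) s.toList hmem
      have hx : s.toList.sum = r * (t ^ 2 * n ^ 2 + n) := by
        rw [Multiset.sum_toList]; exact hsum
      have hm : s.toList.length = m := by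
        rw [Multiset.length_toList]; exact hcard
      have hkey := stmt16_key' r n t (s.toList.count (r * (t * n ^ 2)))
        (s.toList.count (r * (t * n ^ 2 + n))) (s.toList.count (r * (t ^ 2 * n + 1)))
        (s.toList.count (r * (t ^ 2 * n + n + 1)))
        (s.toList.count (t ^ 2 * n ^ 2 - t ^ 2 * n - 1)) hr hn ht (by rw [← hsum']; exact hx)
      rcases hkey with h | h | h <;> simp only [Prod.mk.injEq] at h <;> omega
    · have hatom : ∀ y : ℕ, (y = r * (t * n ^ 2) ∨ y = r * (t * n ^ 2 + n) ∨
          y = r * (t ^ 2 * n + 1) ∨ y = r * (t ^ 2 * n + n + 1) ∨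
          y = t ^ 2 * n ^ 2 - t ^ 2 * n - 1) →
          NumAtom (AddSubmonoid.closure
            ({r * (t * n ^ 2), r * (t * n ^ 2 + n), r * (t ^ 2 * n + 1),
              r * (t ^ 2 * n + n + 1), t ^ 2 * n ^ 2 - t ^ 2 * n - 1} : Set ℕ)) y :=
        fun y hy => (stmt16_atom_iff r n t hr hn ht y).mpr hy
      rintro (rfl | h | h)
      · -- m = r + 1 : v4 + r * v5
        refine ⟨{r * (t ^ 2 * n + n + 1)} + Multiset.replicate r (t ^ 2 * n ^ 2 - t ^ 2 * n - 1),
          ?_, ?_, ?_⟩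
        · intro y hy
          rcases Multiset.mem_add.mp hy with h | h
          · rw [Multiset.mem_singleton] at h
            exact hatom y (by omega)
          · have := Multiset.eq_of_mem_replicate h
            exact hatom y (by omega)
        · simp
        · simp only [Multiset.sum_add, Multiset.sum_singleton, Multiset.sum_replicate,
            smul_eq_mul]
          have hn3 : 3 ≤ n := by omega
          have hsub : t ^ 2 * n + 1 ≤ t ^ 2 * n ^ 2 := by
            nlinarith [mul_le_mul_of_nonneg_left hn3 (Nat.zero_le (t ^ 2 * n))]
          obtain ⟨F, hF⟩ : ∃ F, t ^ 2 * n ^ 2 - t ^ 2 * n - 1 = F := ⟨_, rfl⟩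
          rw [hF]
          have hFe : F + (t ^ 2 * n + 1) = t ^ 2 * n ^ 2 := by omega
          have k1 : r * F + r * (t ^ 2 * n + 1) = r * (t ^ 2 * n ^ 2) := by
            rw [← hFe]; ring
          have k2 : r * (t ^ 2 * n + n + 1) = r * (t ^ 2 * n) + r * n + r := by ring
          have k3 : r * (t ^ 2 * n ^ 2 + n) = r * (t ^ 2 * n ^ 2) + r * n := by ring
          have k4 : r * (t ^ 2 * n + 1) = r * (t ^ 2 * n) + r := by ring
          omega
      · -- m = n : n copies of v3
        rw [h]
        refine ⟨Multiset.replicate n (r * (t ^ 2 * n + 1)), ?_, by simp, ?_⟩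
        · intro y hy
          have := Multiset.eq_of_mem_replicate hy
          exact hatom y (by omega)
        · simp only [Multiset.sum_replicate, smul_eq_mul]
          ring
      · -- m = t : (t-1) copies of v1 and one v2
        rw [h]
        obtain ⟨t', rfl⟩ : ∃ t', t = t' + 1 := ⟨t - 1, by omega⟩
        refine ⟨Multiset.replicate t' (r * ((t' + 1) * n ^ 2)) +
          {r * ((t' + 1) * n ^ 2 + n)}, ?_, ?_, ?_⟩
        · intro y hy
          rcases Multiset.mem_add.mp hy with h | h
          · have := Multiset.eq_of_mem_replicate h
            exact hatom y (by omega)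
          · rw [Multiset.mem_singleton] at h
            exact hatom y (by omega)
        · simp
        · simp only [Multiset.sum_add, Multiset.sum_singleton, Multiset.sum_replicate,
            smul_eq_mul]
          ring
end
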